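/- arXiv:1112.5070 — 4 statements merged into one kernel-verified Lean document; each statement's English description precedes it below -/
import Mathlib

section
/- Let (A, 𝒜, μ) be a σ-finite measure space, let C ≥ 2 and q ≥ 2 be integers, and let c_1, …, c_q be nonempty subsets of [C] = {1, …, C} such that each element of [C] belongs to exactly two of the sets c_i (so ⋃_i c_i = [C] and Σ_i |c_i| = 2C). For each i let h_i ∈ L²(μ^{|c_i|}). Then the function z ↦ Π_{i=1}^q h_i(z_{c_i}) is μ^C-integrable on A^C and |∫_{A^C} Π_{i=1}^q h_i(z_{c_i}) dμ^C(z)| ≤ Π_{i=1}^q ‖h_i‖_{L²(μ^{|c_i|})}. -/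
open MeasureTheory Finset
open scoped ENNReal

private lemma gcs_key {A : Type*} [MeasurableSpace A] (μ : Measure A) [SigmaFinite μ]
    {ι κ : Type*} [Fintype ι] [DecidableEq ι] [Fintype κ] [DecidableEq κ] :
    ∀ (n : ℕ) (s : Finset ι) (_ : s.card = n) (f : κ → (ι → A) → ℝ≥0∞) (d : κ → Finset ι),
    (∀ i, Measurable (f i)) →
    (∀ i, d i ⊆ s) →
    (∀ i (z z' : ι → A), (∀ x ∈ d i, z x = z' x) → f i z = f i z') →
    (∀ x ∈ s, (Finset.univ.filter fun i => x ∈ d i).card = 2) →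
    ∀ z, (∫⋯∫⁻_s, (fun w => ∏ i, f i w) ∂(fun _ => μ)) z
      ≤ ∏ i, ((∫⋯∫⁻_(d i), (fun w => f i w ^ (2:ℝ)) ∂(fun _ => μ)) z) ^ (1/2 : ℝ) := by
  intro n
  induction n with
  | zero =>
    intro s hs f d hmeas hsub hdep hcov z
    rw [Finset.card_eq_zero] at hs
    subst hs
    have hd : ∀ i, d i = ∅ := fun i => Finset.subset_empty.mp (hsub i)
    simp only [lmarginal_empty]
    refine Finset.prod_le_prod' fun i _ => ?_
    rw [hd i, lmarginal_empty, ← ENNReal.rpow_mul]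
    norm_num
  | succ n ih =>
    intro s hs f d hmeas hsub hdep hcov z
    have hsne : s.Nonempty := Finset.card_pos.mp (by omega)
    obtain ⟨x, hx⟩ := hsne
    obtain ⟨i₁, i₂, hi12, hpair⟩ := Finset.card_eq_two.mp (hcov x hx)
    have hxi : ∀ i, x ∈ d i ↔ (i = i₁ ∨ i = i₂) := by
      intro i
      have h1 : x ∈ d i ↔ i ∈ Finset.univ.filter fun j => x ∈ d j := by simp
      rw [h1, hpair, Finset.mem_insert, Finset.mem_singleton]
    set t := s.erase x with ht
    have hxt : x ∉ t := Finset.notMem_erase x s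
    have htcard : t.card = n := by
      rw [ht, Finset.card_erase_of_mem hx]; omega
    -- squared functions are measurable
    have hmeas2 : ∀ i, Measurable (fun w => f i w ^ (2:ℝ)) := fun i =>
      ENNReal.continuous_rpow_const.measurable.comp (hmeas i)
    -- new functions
    set g : κ → (ι → A) → ℝ≥0∞ :=
      fun i w => ((∫⋯∫⁻_{x}, (fun v => f i v ^ (2:ℝ)) ∂(fun _ => μ)) w) ^ (1/2 : ℝ) with hg
    set f' : κ → (ι → A) → ℝ≥0∞ := fun i => if i = i₁ ∨ i = i₂ then g i else f i with hf'
    set d' : κ → Finset ι := fun i => (d i).erase x with hd'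
    have hmeasg : ∀ i, Measurable (g i) := fun i =>
      ENNReal.continuous_rpow_const.measurable.comp ((hmeas2 i).lmarginal _)
    have hmeas' : ∀ i, Measurable (f' i) := by
      intro i
      by_cases hi : i = i₁ ∨ i = i₂
      · simpa [hf', hi] using hmeasg i
      · simpa [hf', hi] using hmeas i
    have hsub' : ∀ i, d' i ⊆ t := fun i => Finset.erase_subset_erase x (hsub i)
    have hdepg : ∀ i (w w' : ι → A), (∀ y ∈ (d i).erase x, w y = w' y) → g i w = g i w' := by
      intro i w w' hagree
      simp only [hg, lmarginal_singleton]
      congr 1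
      refine lintegral_congr fun a => ?_
      congr 1
      refine hdep i _ _ fun y hy => ?_
      by_cases hyx : y = x
      · subst hyx; simp
      · rw [Function.update_of_ne hyx, Function.update_of_ne hyx]
        exact hagree y (Finset.mem_erase.mpr ⟨hyx, hy⟩)
    have hdep' : ∀ i (w w' : ι → A), (∀ y ∈ d' i, w y = w' y) → f' i w = f' i w' := by
      intro i w w' hagree
      by_cases hi : i = i₁ ∨ i = i₂
      · simp only [hf', if_pos hi]
        exact hdepg i w w' hagree
      · simp only [hf', if_neg hi]
        have hxd : x ∉ d i := fun hxd => hi ((hxi i).mp hxd)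
        refine hdep i _ _ fun y hy => hagree y ?_
        exact Finset.mem_erase.mpr ⟨fun hyx => hxd (hyx ▸ hy), hy⟩
    have hcov' : ∀ y ∈ t, (Finset.univ.filter fun i => y ∈ d' i).card = 2 := by
      intro y hy
      obtain ⟨hyx, hys⟩ := Finset.mem_erase.mp hy
      have : (Finset.univ.filter fun i => y ∈ d' i) = Finset.univ.filter fun i => y ∈ d i := by
        refine Finset.filter_congr fun i _ => ?_
        simp [hd', Finset.mem_erase, hyx]
      rw [this]; exact hcov y hys
    have IH := ih t htcard f' d' hmeas' hsub' hdep' hcov'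
    -- measurability of products
    have hmeasP : Measurable (fun w => ∏ i, f i w) :=
      Finset.measurable_prod _ fun i _ => hmeas i
    have hmeasP' : Measurable (fun w => ∏ i, f' i w) :=
      Finset.measurable_prod _ fun i _ => hmeas' i
    -- key pointwise claim
    have claim : ∀ w : ι → A,
        (∫⁻ a, (fun v => ∏ i, f i v) (Function.update w x a) ∂μ) ≤ ∏ i, f' i w := by
      intro w
      have hrest : ∀ a, ∀ i ∈ (Finset.univ.erase i₁).erase i₂,
          f i (Function.update w x a) = f i w := by
        intro a i hi
        obtain ⟨hii₂, hi'⟩ := Finset.mem_erase.mp hi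
        have hii₁ : i ≠ i₁ := (Finset.mem_erase.mp hi').1
        have hxd : x ∉ d i := fun hxd => by
          rcases (hxi i).mp hxd with h | h
          · exact hii₁ h
          · exact hii₂ h
        refine hdep i _ _ fun y hy => ?_
        have : y ≠ x := fun hyx => hxd (hyx ▸ hy)
        exact Function.update_of_ne this _ _
      have hsplit : ∀ a, ∏ i, f i (Function.update w x a) =
          (f i₁ (Function.update w x a) * f i₂ (Function.update w x a)) *
            ∏ i ∈ (Finset.univ.erase i₁).erase i₂, f i w := by
        intro a
        rw [← Finset.mul_prod_erase Finset.univ _ (Finset.mem_univ i₁),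
          ← Finset.mul_prod_erase _ _ (Finset.mem_erase.mpr ⟨(Ne.symm hi12), Finset.mem_univ i₂⟩),
          ← mul_assoc]
        congr 1
        exact Finset.prod_congr rfl (hrest a)
      simp only [hsplit]
      have hm1 : Measurable fun a => f i₁ (Function.update w x a) * f i₂ (Function.update w x a) :=
        ((hmeas i₁).comp (measurable_update w)).mul ((hmeas i₂).comp (measurable_update w))
      rw [lintegral_mul_const _ hm1]
      have hCS : (∫⁻ a, f i₁ (Function.update w x a) * f i₂ (Function.update w x a) ∂μ)
          ≤ g i₁ w * g i₂ w := by
        have h22 : Real.HolderConjugate 2 2 := Real.HolderConjugate.two_two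
        have := ENNReal.lintegral_mul_le_Lp_mul_Lq μ h22
          (f := fun a => f i₁ (Function.update w x a))
          (g := fun a => f i₂ (Function.update w x a))
          (((hmeas i₁).comp (measurable_update w)).aemeasurable)
          (((hmeas i₂).comp (measurable_update w)).aemeasurable)
        simp only [hg, lmarginal_singleton]
        exact this
      have hprodf' : ∏ i, f' i w = (f' i₁ w * f' i₂ w) *
          ∏ i ∈ (Finset.univ.erase i₁).erase i₂, f' i w := by
        rw [← Finset.mul_prod_erase Finset.univ _ (Finset.mem_univ i₁),
          ← Finset.mul_prod_erase _ _ (Finset.mem_erase.mpr ⟨(Ne.symm hi12), Finset.mem_univ i₂⟩),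
          ← mul_assoc]
      rw [hprodf']
      have hf'rest : ∀ i ∈ (Finset.univ.erase i₁).erase i₂, f' i w = f i w := by
        intro i hi
        obtain ⟨hii₂, hi'⟩ := Finset.mem_erase.mp hi
        have hii₁ : i ≠ i₁ := (Finset.mem_erase.mp hi').1
        simp [hf', hii₁, hii₂]
      rw [Finset.prod_congr rfl hf'rest]
      refine mul_le_mul_left ?_ _
      have h1 : f' i₁ w = g i₁ w := by simp [hf']
      have h2 : f' i₂ w = g i₂ w := by simp [hf']
      rw [h1, h2]
      exact hCS
    -- main chain
    calc (∫⋯∫⁻_s, (fun w => ∏ i, f i w) ∂(fun _ => μ)) z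
        = (∫⋯∫⁻_t, (fun w => ∫⁻ a, (fun v => ∏ i, f i v) (Function.update w x a) ∂μ)
            ∂(fun _ => μ)) z := by
          rw [← lmarginal_erase' (μ := fun _ => μ) _ hmeasP hx]
      _ ≤ (∫⋯∫⁻_t, (fun w => ∏ i, f' i w) ∂(fun _ => μ)) z :=
          lmarginal_mono (fun w => claim w) z
      _ ≤ ∏ i, ((∫⋯∫⁻_(d' i), (fun w => f' i w ^ (2:ℝ)) ∂(fun _ => μ)) z) ^ (1/2 : ℝ) := IH z
      _ = ∏ i, ((∫⋯∫⁻_(d i), (fun w => f i w ^ (2:ℝ)) ∂(fun _ => μ)) z) ^ (1/2 : ℝ) := by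
          refine Finset.prod_congr rfl fun i _ => ?_
          congr 1
          by_cases hi : i = i₁ ∨ i = i₂
          · have hxd : x ∈ d i := (hxi i).mpr hi
            have hsq : (fun w => f' i w ^ (2:ℝ)) =
                fun w => (∫⋯∫⁻_{x}, (fun v => f i v ^ (2:ℝ)) ∂(fun _ => μ)) w := by
              funext w
              simp only [hf', if_pos hi, hg, ← ENNReal.rpow_mul]
              norm_num
            rw [hsq]
            have hdisj : Disjoint (d' i) ({x} : Finset ι) := by
              simp [hd', Finset.disjoint_singleton_right]
            have := lmarginal_union (fun _ : ι => μ) (fun v => f i v ^ (2:ℝ)) (hmeas2 i) hdisj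
            have hun : d' i ∪ {x} = d i := by
              show (d i).erase x ∪ {x} = d i
              rw [Finset.union_comm, ← Finset.insert_eq, Finset.insert_erase hxd]
            rw [hun] at this
            rw [← this]
          · have hxd : x ∉ d i := fun hxd => hi ((hxi i).mp hxd)
            have : d' i = d i := Finset.erase_eq_of_notMem hxd
            rw [this]
            simp only [hf', if_neg hi]


/-- **Generalized Cauchy–Schwarz inequality** (Lemma 2.3(i) of Nourdin–Rosiński).
Let `(A, 𝒜, μ)` be a σ-finite measure space, `C, q ≥ 2`, and `c 1, …, c q` nonempty
subsets of `[C]` such that each element of `[C]` belongs to exactly two of the `c i`.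
If `h i ∈ L²(μ^{|c i|})` for each `i`, then `z ↦ ∏ i, h i (z restricted to c i)` is
`μ^C`-integrable and `|∫ ∏ i, h i (z_{c i}) dμ^C| ≤ ∏ i, ‖h i‖_{L²}`. -/
theorem generalized_cauchy_schwarz
    {A : Type*} [MeasurableSpace A] (μ : Measure A) [SigmaFinite μ]
    (C q : ℕ) (hC : 2 ≤ C) (hq : 2 ≤ q)
    (c : Fin q → Finset (Fin C))
    (hne : ∀ i, (c i).Nonempty)
    (hcover : ∀ x : Fin C, (Finset.univ.filter fun i => x ∈ c i).card = 2)
    (h : (i : Fin q) → ({x // x ∈ c i} → A) → ℝ)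
    (hL2 : ∀ i, MemLp (h i) 2 (Measure.pi fun _ : {x // x ∈ c i} => μ)) :
    Integrable (fun z : Fin C → A => ∏ i, h i fun x => z x.1)
      (Measure.pi fun _ : Fin C => μ) ∧
    |∫ z : Fin C → A, ∏ i, h i (fun x => z x.1) ∂(Measure.pi fun _ : Fin C => μ)|
      ≤ ∏ i, (eLpNorm (h i) 2 (Measure.pi fun _ : {x // x ∈ c i} => μ)).toReal := by
  classical
  rcases isEmpty_or_nonempty A with hA | hA
  · haveI : IsEmpty (Fin C → A) := ⟨fun z => hA.false (z ⟨0, by omega⟩)⟩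
    have hν0 : (Measure.pi fun _ : Fin C => μ) = 0 :=
      Measure.eq_zero_of_isEmpty _
    rw [hν0]
    refine ⟨integrable_zero_measure, ?_⟩
    rw [integral_zero_measure, abs_zero]
    exact Finset.prod_nonneg fun i _ => ENNReal.toReal_nonneg
  -- restriction maps
  set ν := Measure.pi fun _ : Fin C => μ with hν
  have hrmeas : ∀ i, Measurable (fun z : Fin C → A => (fun x : {x // x ∈ c i} => z x.1)) :=
    fun i => measurable_pi_lambda _ fun x => measurable_pi_apply x.1
  have hqmp : ∀ i, Measure.QuasiMeasurePreserving
      (fun z : Fin C → A => (fun x : {x // x ∈ c i} => z x.1)) ν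
      (Measure.pi fun _ : {x // x ∈ c i} => μ) := by
    intro i
    refine ⟨hrmeas i, ?_⟩
    have he := measurePreserving_piEquivPiSubtypeProd (fun _ : Fin C => μ)
      (fun x : Fin C => x ∈ c i)
    have heq : (fun z : Fin C → A => (fun x : {x // x ∈ c i} => z x.1)) =
        (fun p => p.1) ∘
          (MeasurableEquiv.piEquivPiSubtypeProd (fun _ : Fin C => A)
            (fun x : Fin C => x ∈ c i)) := rfl
    rw [heq, ← Measure.map_map measurable_fst (MeasurableEquiv.measurable _), he.map_eq,
      Measure.map_fst_prod]
    have hinst : (Subtype.fintype fun x : Fin C => x ∈ c i) = Finset.Subtype.fintype (c i) :=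
      Subsingleton.elim _ _
    rw [hinst]
    exact Measure.AbsolutelyContinuous.rfl.smul_left _
  let z₀ : Fin C → A := fun _ => Classical.arbitrary A
  let k : (i : Fin q) → ({x // x ∈ c i} → A) → ℝ := fun i => (hL2 i).1.mk (h i)
  have hkmeas : ∀ i, Measurable (k i) := fun i => (hL2 i).1.stronglyMeasurable_mk.measurable
  have hkae : ∀ i, h i =ᵐ[Measure.pi fun _ : {x // x ∈ c i} => μ] k i :=
    fun i => (hL2 i).1.ae_eq_mk
  -- the ℝ≥0∞-valued functions
  set F : Fin q → (Fin C → A) → ℝ≥0∞ :=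
    fun i z => (‖k i (fun x : {x // x ∈ c i} => z x.1)‖₊ : ℝ≥0∞) with hF
  have hFmeas : ∀ i, Measurable (F i) := fun i => ((hkmeas i).comp (hrmeas i)).nnnorm.coe_nnreal_ennreal
  have hFdep : ∀ i (z z' : Fin C → A), (∀ x ∈ c i, z x = z' x) → F i z = F i z' := by
    intro i z z' hag
    have : (fun x : {x // x ∈ c i} => z x.1) = fun x : {x // x ∈ c i} => z' x.1 :=
      funext fun x => hag x.1 x.2
    simp only [hF, this]
  have hkey := gcs_key μ (Finset.univ : Finset (Fin C)).card Finset.univ rfl F c hFmeas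
    (fun i => Finset.subset_univ _) hFdep (fun x _ => hcover x) z₀
  simp only [lmarginal_univ] at hkey
  -- identify the right-hand side terms
  have hterm : ∀ i, (∫⋯∫⁻_(c i), (fun w => F i w ^ (2:ℝ)) ∂(fun _ => μ)) z₀ =
      ∫⁻ y, ((‖k i y‖₊ : ℝ≥0∞)) ^ (2:ℝ) ∂(Measure.pi fun _ : {x // x ∈ c i} => μ) := by
    intro i
    rw [lmarginal]
    refine lintegral_congr fun y => ?_
    have : (fun x : {x // x ∈ c i} => (Function.updateFinset z₀ (c i) y) x.1) = y := by
      funext x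
      simp [Function.updateFinset, x.2]
    simp only [hF, this]
  have hsnorm : ∀ i, eLpNorm (h i) 2 (Measure.pi fun _ : {x // x ∈ c i} => μ) =
      ((∫⁻ y, ((‖k i y‖₊ : ℝ≥0∞)) ^ (2:ℝ) ∂(Measure.pi fun _ : {x // x ∈ c i} => μ)) ^ (1/2 : ℝ)) := by
    intro i
    rw [eLpNorm_congr_ae (hkae i), eLpNorm_eq_lintegral_rpow_enorm_toReal (by norm_num) (by norm_num)]
    norm_num
    rfl
  rw [show (∏ i, ((∫⋯∫⁻_(c i), (fun w => F i w ^ (2:ℝ)) ∂(fun _ => μ)) z₀) ^ (1/2 : ℝ)) =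
      ∏ i, eLpNorm (h i) 2 (Measure.pi fun _ : {x // x ∈ c i} => μ) from
    Finset.prod_congr rfl fun i _ => by rw [hterm i, ← hsnorm i]] at hkey
  -- a.e. identification of the product
  have hae : ∀ᵐ z ∂ν, ∀ i, h i (fun x : {x // x ∈ c i} => z x.1) =
      k i (fun x : {x // x ∈ c i} => z x.1) := by
    rw [ae_all_iff]
    intro i
    exact (hqmp i).ae_eq (hkae i)
  have hbound : ∫⁻ z, (‖∏ i, h i (fun x : {x // x ∈ c i} => z x.1)‖₊ : ℝ≥0∞) ∂ν ≤
      ∏ i, eLpNorm (h i) 2 (Measure.pi fun _ : {x // x ∈ c i} => μ) := by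
    refine le_trans (le_of_eq (lintegral_congr_ae ?_)) hkey
    filter_upwards [hae] with z hz
    rw [nnnorm_prod, ENNReal.coe_finset_prod]
    exact Finset.prod_congr rfl fun i _ => by rw [hz i]
  have hfin : (∏ i, eLpNorm (h i) 2 (Measure.pi fun _ : {x // x ∈ c i} => μ)) ≠ ∞ :=
    (ENNReal.prod_lt_top fun i _ => (hL2 i).2).ne
  have haesm : AEStronglyMeasurable
      (fun z : Fin C → A => ∏ i, h i (fun x : {x // x ∈ c i} => z x.1)) ν :=
    Finset.aestronglyMeasurable_fun_prod _ fun i _ =>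
      (hL2 i).1.comp_quasiMeasurePreserving (hqmp i)
  have hint : Integrable (fun z : Fin C → A => ∏ i, h i (fun x : {x // x ∈ c i} => z x.1)) ν :=
    ⟨haesm, lt_of_le_of_lt hbound (lt_of_le_of_ne le_top hfin)⟩
  refine ⟨hint, ?_⟩
  calc |∫ z, ∏ i, h i (fun x : {x // x ∈ c i} => z x.1) ∂ν|
      ≤ ∫ z, ‖∏ i, h i (fun x : {x // x ∈ c i} => z x.1)‖ ∂ν := by
        rw [← Real.norm_eq_abs]
        exact norm_integral_le_integral_norm _
    _ = (∫⁻ z, (‖∏ i, h i (fun x : {x // x ∈ c i} => z x.1)‖₊ : ℝ≥0∞) ∂ν).toReal :=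
        integral_norm_eq_lintegral_enorm haesm
    _ ≤ (∏ i, eLpNorm (h i) 2 (Measure.pi fun _ : {x // x ∈ c i} => μ)).toReal :=
        ENNReal.toReal_mono hfin hbound
    _ = ∏ i, (eLpNorm (h i) 2 (Measure.pi fun _ : {x // x ∈ c i} => μ)).toReal :=
        ENNReal.toReal_prod _ _
end

section
/- Let (A, 𝒜, μ) be a σ-finite measure space, let p, q ≥ 1 be integers, and let f ∈ L²(μ^p) and g ∈ L²(μ^q) be symmetric. Let σ be a permutation of {1, …, p+q} and let r be the cardinality of {1, …, p} ∩ {σ(p+1), …, σ(p+q)}. Then (i) r also equals the cardinality of {p+1, …, p+q} ∩ {σ(1), …, σ(p)}, and (ii) the function (t_1, …, t_{p+q}) ↦ f(t_1,…,t_p) g(t_{p+1},…,t_{p+q}) f(t_{σ(1)},…,t_{σ(p)}) g(t_{σ(p+1)},…,t_{σ(p+q)}) is μ^{p+q}-integrable with ∫_{A^{p+q}} f(t_1,…,t_p) g(t_{p+1},…,t_{p+q}) f(t_{σ(1)},…,t_{σ(p)}) g(t_{σ(p+1)},…,t_{σ(p+q)}) dμ(t_1)…dμ(t_{p+q}) =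 ‖f ⊗_r g‖². -/
open MeasureTheory

/-- The contraction `f ⊗_r g` of `f ∈ L²(μ^p)` and `g ∈ L²(μ^q)`:
`(f ⊗_r g)(t₁,…,t_{p+q-2r}) = ∫_{A^r} f(t₁,…,t_{p-r},s₁,…,s_r)
  g(t_{p-r+1},…,t_{p+q-2r},s₁,…,s_r) dμ^r(s)`. -/
noncomputable def contraction {A : Type*} [MeasurableSpace A] (μ : Measure A)
    (p q r : ℕ) (f : (Fin p → A) → ℝ) (g : (Fin q → A) → ℝ) :
    (Fin ((p - r) + (q - r)) → A) → ℝ :=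
  fun t => ∫ s : Fin r → A,
      (f fun i => if h : (i : ℕ) < p - r then t (Fin.castAdd (q - r) ⟨i, h⟩)
        else s ⟨(i : ℕ) - (p - r), by have := i.isLt; omega⟩) *
      (g fun j => if h : (j : ℕ) < q - r then t (Fin.natAdd (p - r) ⟨j, h⟩)
        else s ⟨(j : ℕ) - (q - r), by have := j.isLt; omega⟩)
    ∂(Measure.pi fun _ : Fin r => μ)

/-- The tensor product `(f ⊗ g)(t₁,…,t_{p+q}) = f(t₁,…,t_p) g(t_{p+1},…,t_{p+q})`. -/
noncomputable def tensorProd {A : Type*} {p q : ℕ}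
    (f : (Fin p → A) → ℝ) (g : (Fin q → A) → ℝ) : (Fin (p + q) → A) → ℝ :=
  fun t => f (fun i => t (Fin.castAdd q i)) * g (fun j => t (Fin.natAdd p j))

/-- The symmetrization `h̃(t₁,…,t_m) = (1/m!) ∑_{σ ∈ S_m} h(t_{σ(1)},…,t_{σ(m)})`. -/
noncomputable def symmetrize {A : Type*} {m : ℕ} (h : (Fin m → A) → ℝ) :
    (Fin m → A) → ℝ :=
  fun t => (m.factorial : ℝ)⁻¹ * ∑ σ : Equiv.Perm (Fin m), h fun i => t (σ i)


lemma card_fin_lt (n k : ℕ) (h : k ≤ n) : Fintype.card {i : Fin n // (i:ℕ) < k} = k := by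
  have e : {i : Fin n // (i:ℕ) < k} ≃ Fin k :=
    { toFun := fun x => ⟨x.1.1, x.2⟩
      invFun := fun y => ⟨⟨y.1, lt_of_lt_of_le y.2 h⟩, y.2⟩
      left_inv := fun x => by ext; rfl
      right_inv := fun y => rfl }
  simp [Fintype.card_congr e]

lemma exists_perm_comp {α : Type*} {n : ℕ} {u v : Fin n → α}
    (hu : Function.Injective u) (hv : Function.Injective v)
    (h : Set.range u = Set.range v) : ∃ π : Equiv.Perm (Fin n), ∀ i, u (π i) = v i := by
  refine ⟨(Equiv.ofInjective v hv).trans ((Equiv.setCongr h.symm).trans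
    (Equiv.ofInjective u hu).symm), fun i => ?_⟩
  simp [Equiv.setCongr, Equiv.subtypeEquivProp, Equiv.subtypeEquiv, Equiv.apply_ofInjective_symm]

lemma ae_comp_inj {A : Type*} [MeasurableSpace A] (μ : Measure A) [SigmaFinite μ]
    {ι κ : Type*} [Fintype ι] [Fintype κ] {e : ι → κ} (he : Function.Injective e)
    {P : (ι → A) → Prop} (h : ∀ᵐ x ∂(Measure.pi fun _ : ι => μ), P x) :
    ∀ᵐ w ∂(Measure.pi fun _ : κ => μ), P (fun i => w (e i)) := by
  classical
  rw [ae_iff] at h ⊢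
  set N := toMeasurable (Measure.pi fun _ : ι => μ) {x | ¬ P x} with hN
  have hNmeas : MeasurableSet N := measurableSet_toMeasurable _ _
  have hN0 : (Measure.pi fun _ : ι => μ) N = 0 := by
    rw [hN, measure_toMeasurable]; exact h
  have hsub : {x | ¬ P x} ⊆ N := subset_toMeasurable _ _
  have key : (Measure.pi fun _ : κ => μ) ((fun w (i : ι) => w (e i)) ⁻¹' N) = 0 := by
    set p : κ → Prop := fun k => k ∈ Set.range e with hp
    have MP1 := measurePreserving_piEquivPiSubtypeProd (fun _ : κ => μ) p
    set eR : ι ≃ {k // p k} := Equiv.ofInjective e he with heR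
    set E2 := MeasurableEquiv.piCongrLeft (fun _ : {k // p k} => A) eR with hE2
    have MP2 : MeasurePreserving E2.symm (Measure.pi fun _ : {k // p k} => μ)
        (Measure.pi fun _ : ι => μ) :=
      (measurePreserving_piCongrLeft (fun _ : {k // p k} => μ) eR).symm E2
    have hcomp : (fun w (i : ι) => w (e i)) =
        (fun w : (κ → A) =>
          E2.symm (Prod.fst (MeasurableEquiv.piEquivPiSubtypeProd (fun _ : κ => A) p w))) := by
      funext w; funext i; rfl
    rw [hcomp]
    have hpre : (fun w : (κ → A) =>
          E2.symm (Prod.fst (MeasurableEquiv.piEquivPiSubtypeProd (fun _ : κ => A) p w))) ⁻¹' N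
        = (MeasurableEquiv.piEquivPiSubtypeProd (fun _ : κ => A) p) ⁻¹'
            (Prod.fst ⁻¹' (E2.symm ⁻¹' N)) := rfl
    rw [hpre, MP1.measure_preimage]
    · have hss : (Prod.fst ⁻¹' (E2.symm ⁻¹' N) :
          Set ((({k // p k} → A)) × ({k // ¬ p k} → A)))
          = (E2.symm ⁻¹' N) ×ˢ (Set.univ : Set ({k // ¬ p k} → A)) := by
        ext z; simp
      have h0 : (Measure.pi fun _ : {k // p k} => μ) (⇑E2.symm ⁻¹' N) = 0 := by
        rw [MP2.measure_preimage hNmeas.nullMeasurableSet]; exact hN0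
      rw [hss, Measure.prod_prod]
      refine mul_eq_zero_of_left ?_ _
      convert h0 using 3
    · exact (measurable_fst (E2.symm.measurable hNmeas)).nullMeasurableSet
  exact measure_mono_null (fun w hw => hsub hw) key

section glue
variable {A : Type*} [MeasurableSpace A]

lemma glue_eq_equiv (n₁ n₂ n : ℕ) (h : n₁ + n₂ = n) :
    (fun z : (Fin n₁ → A) × (Fin n₂ → A) => fun i : Fin n =>
        if hi : (i : ℕ) < n₁ then z.1 ⟨i, hi⟩ else z.2 ⟨(i : ℕ) - n₁, by omega⟩)
      = ⇑((MeasurableEquiv.sumPiEquivProdPi (fun _ : Fin n₁ ⊕ Fin n₂ => A)).symm.trans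
          (MeasurableEquiv.piCongrLeft (fun _ : Fin n => A)
            (finSumFinEquiv.trans (finCongr h)))) := by
  set e : Fin n₁ ⊕ Fin n₂ ≃ Fin n := finSumFinEquiv.trans (finCongr h) with he
  have he1 : ∀ k : Fin n₁, (e (Sum.inl k) : ℕ) = (k : ℕ) := by
    intro k; simp [he, finCongr_apply]
  have he2 : ∀ k : Fin n₂, (e (Sum.inr k) : ℕ) = n₁ + (k : ℕ) := by
    intro k; simp [he, finCongr_apply]
  funext z
  have key1 : ∀ k : Fin n₁,
      (MeasurableEquiv.piCongrLeft (fun _ : Fin n => A) e)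
        ((MeasurableEquiv.sumPiEquivProdPi (fun _ : Fin n₁ ⊕ Fin n₂ => A)).symm z)
        (e (Sum.inl k)) = z.1 k := by
    intro k
    rw [MeasurableEquiv.coe_piCongrLeft, MeasurableEquiv.coe_sumPiEquivProdPi_symm]
    exact Equiv.piCongrLeft_sumInl (fun _ => A) e z.1 z.2 k
  have key2 : ∀ k : Fin n₂,
      (MeasurableEquiv.piCongrLeft (fun _ : Fin n => A) e)
        ((MeasurableEquiv.sumPiEquivProdPi (fun _ : Fin n₁ ⊕ Fin n₂ => A)).symm z)
        (e (Sum.inr k)) = z.2 k := by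
    intro k
    rw [MeasurableEquiv.coe_piCongrLeft, MeasurableEquiv.coe_sumPiEquivProdPi_symm]
    exact Equiv.piCongrLeft_sumInr (fun _ => A) e z.1 z.2 k
  funext i
  show _ = (MeasurableEquiv.piCongrLeft (fun _ : Fin n => A) e)
        ((MeasurableEquiv.sumPiEquivProdPi (fun _ : Fin n₁ ⊕ Fin n₂ => A)).symm z) i
  by_cases hi : (i : ℕ) < n₁
  · rw [dif_pos hi, ← key1 ⟨i, hi⟩]
    refine congrArg _ (Fin.ext ?_)
    exact he1 ⟨i, hi⟩
  · rw [dif_neg hi, ← key2 ⟨(i : ℕ) - n₁, by omega⟩]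
    refine congrArg _ (Fin.ext ?_)
    rw [he2]; simp; omega

lemma measurePreserving_glue (μ : Measure A) [SigmaFinite μ]
    (n₁ n₂ n : ℕ) (h : n₁ + n₂ = n) :
    MeasurePreserving
      (fun z : (Fin n₁ → A) × (Fin n₂ → A) => fun i : Fin n =>
        if hi : (i : ℕ) < n₁ then z.1 ⟨i, hi⟩ else z.2 ⟨(i : ℕ) - n₁, by omega⟩)
      ((Measure.pi fun _ : Fin n₁ => μ).prod (Measure.pi fun _ : Fin n₂ => μ))
      (Measure.pi fun _ : Fin n => μ) := by
  rw [glue_eq_equiv n₁ n₂ n h]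
  exact ((measurePreserving_piCongrLeft (fun _ : Fin n => μ) _).comp
    (measurePreserving_sumPiEquivProdPi_symm (fun _ : Fin n₁ ⊕ Fin n₂ => μ)))

lemma measurableEmbedding_glue (n₁ n₂ n : ℕ) (h : n₁ + n₂ = n) :
    MeasurableEmbedding
      (fun z : (Fin n₁ → A) × (Fin n₂ → A) => fun i : Fin n =>
        if hi : (i : ℕ) < n₁ then z.1 ⟨i, hi⟩ else z.2 ⟨(i : ℕ) - n₁, by omega⟩) := by
  rw [glue_eq_equiv n₁ n₂ n h]
  exact MeasurableEquiv.measurableEmbedding _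
end glue

def glueA {A : Type*} (p q r : ℕ) (t : Fin ((p - r) + (q - r)) → A) (s : Fin r → A) :
    Fin p → A :=
  fun i => if h : (i : ℕ) < p - r then t (Fin.castAdd (q - r) ⟨i, h⟩)
    else s ⟨(i : ℕ) - (p - r), by have := i.isLt; omega⟩

def glueB {A : Type*} (p q r : ℕ) (t : Fin ((p - r) + (q - r)) → A) (s : Fin r → A) :
    Fin q → A :=
  fun j => if h : (j : ℕ) < q - r then t (Fin.natAdd (p - r) ⟨j, h⟩)
    else s ⟨(j : ℕ) - (q - r), by have := j.isLt; omega⟩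

lemma contraction_eq_glue {A : Type*} [MeasurableSpace A] (μ : Measure A)
    (p q r : ℕ) (f : (Fin p → A) → ℝ) (g : (Fin q → A) → ℝ) (t) :
    contraction μ p q r f g t
      = ∫ s : Fin r → A, f (glueA p q r t s) * g (glueB p q r t s)
          ∂(Measure.pi fun _ : Fin r => μ) := rfl

set_option maxHeartbeats 2000000 in
lemma core_lemma {A : Type*} [MeasurableSpace A] (μ : Measure A) [SigmaFinite μ]
    (p q r : ℕ) (hrp : r ≤ p) (hrq : r ≤ q)
    (f : (Fin p → A) → ℝ) (g : (Fin q → A) → ℝ)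
    (hfm : StronglyMeasurable f) (hgm : StronglyMeasurable g)
    (hf : MemLp f 2 (Measure.pi fun _ : Fin p => μ))
    (hg : MemLp g 2 (Measure.pi fun _ : Fin q => μ)) :
    Integrable
      (fun z : (Fin ((p - r) + (q - r)) → A) × ((Fin r → A) × (Fin r → A)) =>
        (f (glueA p q r z.1 z.2.1) * g (glueB p q r z.1 z.2.1)) *
          (f (glueA p q r z.1 z.2.2) * g (glueB p q r z.1 z.2.2)))
      ((Measure.pi fun _ : Fin ((p - r) + (q - r)) => μ).prod
        ((Measure.pi fun _ : Fin r => μ).prod (Measure.pi fun _ : Fin r => μ)))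
    ∧ (∫ z : (Fin ((p - r) + (q - r)) → A) × ((Fin r → A) × (Fin r → A)),
          (f (glueA p q r z.1 z.2.1) * g (glueB p q r z.1 z.2.1)) *
            (f (glueA p q r z.1 z.2.2) * g (glueB p q r z.1 z.2.2))
          ∂((Measure.pi fun _ : Fin ((p - r) + (q - r)) => μ).prod
            ((Measure.pi fun _ : Fin r => μ).prod (Measure.pi fun _ : Fin r => μ))))
      = ∫ x : Fin ((p - r) + (q - r)) → A, (contraction μ p q r f g x) ^ 2
          ∂(Measure.pi fun _ : Fin ((p - r) + (q - r)) => μ) := by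
  set n₀ := (p - r) + (q - r) with hn₀
  set ν₀ : Measure (Fin n₀ → A) := Measure.pi fun _ => μ with hν₀
  set νr : Measure (Fin r → A) := Measure.pi fun _ => μ with hνr
  set νp : Measure (Fin p → A) := Measure.pi fun _ => μ with hνp
  set νq : Measure (Fin q → A) := Measure.pi fun _ => μ with hνq
  -- measurability of glue argument maps
  have hAm : Measurable (fun z : (Fin n₀ → A) × (Fin r → A) => glueA p q r z.1 z.2) := by
    apply measurable_pi_lambda
    intro i
    by_cases h : (i : ℕ) < p - r
    · simp only [glueA, dif_pos h]; exact (measurable_pi_apply _).comp measurable_fst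
    · simp only [glueA, dif_neg h]; exact (measurable_pi_apply _).comp measurable_snd
  have hBm : Measurable (fun z : (Fin n₀ → A) × (Fin r → A) => glueB p q r z.1 z.2) := by
    apply measurable_pi_lambda
    intro j
    by_cases h : (j : ℕ) < q - r
    · simp only [glueB, dif_pos h]; exact (measurable_pi_apply _).comp measurable_fst
    · simp only [glueB, dif_neg h]; exact (measurable_pi_apply _).comp measurable_snd
  set hh : (Fin n₀ → A) × (Fin r → A) → ℝ :=
    fun z => f (glueA p q r z.1 z.2) * g (glueB p q r z.1 z.2) with hhh
  have hhm : StronglyMeasurable hh := (hfm.comp_measurable hAm).mul (hgm.comp_measurable hBm)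
  have hm1 : Measurable (fun z : (Fin n₀ → A) × ((Fin r → A) × (Fin r → A)) => (z.1, z.2.1)) :=
    measurable_fst.prodMk (measurable_fst.comp measurable_snd)
  have hm2 : Measurable (fun z : (Fin n₀ → A) × ((Fin r → A) × (Fin r → A)) => (z.1, z.2.2)) :=
    measurable_fst.prodMk (measurable_snd.comp measurable_snd)
  have hFFm : StronglyMeasurable
      (fun z : (Fin n₀ → A) × ((Fin r → A) × (Fin r → A)) => hh (z.1, z.2.1) * hh (z.1, z.2.2)) :=
    (hhm.comp_measurable hm1).mul (hhm.comp_measurable hm2)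
  -- ENNReal-valued norms
  set φ : (Fin n₀ → A) × (Fin r → A) → ENNReal := fun z => (‖hh z‖₊ : ENNReal) with hφ
  have hφm : Measurable φ := hhm.measurable.nnnorm.coe_nnreal_ennreal
  set α : (Fin n₀ → A) → ENNReal :=
    fun t => ∫⁻ s, (‖f (glueA p q r t s)‖₊ : ENNReal) ^ (2:ℝ) ∂νr with hα
  set β : (Fin n₀ → A) → ENNReal :=
    fun t => ∫⁻ s, (‖g (glueB p q r t s)‖₊ : ENNReal) ^ (2:ℝ) ∂νr with hβ
  -- Cauchy–Schwarz pointwise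
  have hCS : ∀ t, (∫⁻ s, φ (t, s) ∂νr) * (∫⁻ s, φ (t, s) ∂νr) ≤ α t * β t := by
    intro t
    have hconj : Real.HolderConjugate 2 2 := Real.HolderConjugate.two_two
    have hsec : Measurable (fun s : Fin r → A => (t, s)) := measurable_const.prodMk measurable_id
    have hfs : AEMeasurable (fun s => (‖f (glueA p q r t s)‖₊ : ENNReal)) νr :=
      ((hfm.measurable.comp (hAm.comp hsec)).nnnorm.coe_nnreal_ennreal).aemeasurable
    have hgs : AEMeasurable (fun s => (‖g (glueB p q r t s)‖₊ : ENNReal)) νr :=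
      ((hgm.measurable.comp (hBm.comp hsec)).nnnorm.coe_nnreal_ennreal).aemeasurable
    have hmul := ENNReal.lintegral_mul_le_Lp_mul_Lq νr hconj hfs hgs
    have hφeq : ∀ s, φ (t, s)
        = (‖f (glueA p q r t s)‖₊ : ENNReal) * (‖g (glueB p q r t s)‖₊ : ENNReal) := by
      intro s; simp [hφ, hhh, nnnorm_mul]
    have hJ : (∫⁻ s, φ (t, s) ∂νr) ≤ (α t) ^ (1/2:ℝ) * (β t) ^ (1/2:ℝ) := by
      calc (∫⁻ s, φ (t, s) ∂νr)
          = ∫⁻ s, (fun s => (‖f (glueA p q r t s)‖₊ : ENNReal))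
              s * (fun s => (‖g (glueB p q r t s)‖₊ : ENNReal)) s ∂νr := by
            simp only [hφeq]
        _ ≤ (α t) ^ (1/2:ℝ) * (β t) ^ (1/2:ℝ) := hmul
    calc (∫⁻ s, φ (t, s) ∂νr) * (∫⁻ s, φ (t, s) ∂νr)
        ≤ ((α t) ^ (1/2:ℝ) * (β t) ^ (1/2:ℝ)) * ((α t) ^ (1/2:ℝ) * (β t) ^ (1/2:ℝ)) :=
          mul_le_mul' hJ hJ
      _ = ((α t) ^ (1/2:ℝ) * (α t) ^ (1/2:ℝ)) * ((β t) ^ (1/2:ℝ) * (β t) ^ (1/2:ℝ)) := by ring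
      _ = α t * β t := by
          rw [← ENNReal.rpow_add_of_nonneg (1/2:ℝ) (1/2:ℝ) (by norm_num) (by norm_num),
            ← ENNReal.rpow_add_of_nonneg (1/2:ℝ) (1/2:ℝ) (by norm_num) (by norm_num)]
          norm_num
  -- splitting α and β
  have hglue0 := measurePreserving_glue μ (p - r) (q - r) n₀ rfl
  have hglue0e := measurableEmbedding_glue (A := A) (p - r) (q - r) n₀ rfl
  have hglueP := measurePreserving_glue μ (p - r) r p (by omega)
  have hgluePe := measurableEmbedding_glue (A := A) (p - r) r p (by omega)
  have hglueQ := measurePreserving_glue μ (q - r) r q (by omega)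
  have hglueQe := measurableEmbedding_glue (A := A) (q - r) r q (by omega)
  have hclaim1 : ∀ (x₁ : Fin (p - r) → A) (x₄ : Fin (q - r) → A) (s : Fin r → A),
      glueA p q r (fun i : Fin n₀ =>
        if hi : (i : ℕ) < p - r then x₁ ⟨i, hi⟩ else x₄ ⟨(i : ℕ) - (p - r), by omega⟩) s
      = (fun i : Fin p =>
          if hi : (i : ℕ) < p - r then x₁ ⟨i, hi⟩ else s ⟨(i : ℕ) - (p - r), by omega⟩) := by
    intro x₁ x₄ s
    funext i
    by_cases h : (i : ℕ) < p - r
    · simp only [glueA, dif_pos h]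
      rw [dif_pos (by simpa using h)]
      exact congrArg x₁ (Fin.ext (by simp))
    · simp only [glueA, dif_neg h]
  have hclaim2 : ∀ (x₁ : Fin (p - r) → A) (x₄ : Fin (q - r) → A) (s : Fin r → A),
      glueB p q r (fun i : Fin n₀ =>
        if hi : (i : ℕ) < p - r then x₁ ⟨i, hi⟩ else x₄ ⟨(i : ℕ) - (p - r), by omega⟩) s
      = (fun j : Fin q =>
          if hj : (j : ℕ) < q - r then x₄ ⟨j, hj⟩ else s ⟨(j : ℕ) - (q - r), by omega⟩) := by
    intro x₁ x₄ s
    funext j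
    by_cases h : (j : ℕ) < q - r
    · simp only [glueB, dif_pos h]
      rw [dif_neg (by simp)]
      congr 1
      exact Fin.ext (by simp)
    · simp only [glueB, dif_neg h]
  -- finiteness of the squared norms
  have hf2 : (∫⁻ u, (‖f u‖₊ : ENNReal) ^ (2:ℝ) ∂νp) < ⊤ := by
    have h2 := lintegral_rpow_enorm_lt_top_of_eLpNorm_lt_top (μ := νp) (f := f)
      (p := 2) (by norm_num) (by norm_num) hf.eLpNorm_lt_top
    simpa [enorm_eq_nnnorm] using h2
  have hg2 : (∫⁻ u, (‖g u‖₊ : ENNReal) ^ (2:ℝ) ∂νq) < ⊤ := by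
    have h2 := lintegral_rpow_enorm_lt_top_of_eLpNorm_lt_top (μ := νq) (f := g)
      (p := 2) (by norm_num) (by norm_num) hg.eLpNorm_lt_top
    simpa [enorm_eq_nnnorm] using h2
  set Fp : (Fin (p - r) → A) × (Fin r → A) → ENNReal := fun z =>
    (‖f (fun i : Fin p =>
      if hi : (i : ℕ) < p - r then z.1 ⟨i, hi⟩
      else z.2 ⟨(i : ℕ) - (p - r), by have := i.isLt; omega⟩)‖₊ : ENNReal) ^ (2:ℝ) with hFp
  set Gq : (Fin (q - r) → A) × (Fin r → A) → ENNReal := fun z =>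
    (‖g (fun j : Fin q =>
      if hj : (j : ℕ) < q - r then z.1 ⟨j, hj⟩
      else z.2 ⟨(j : ℕ) - (q - r), by have := j.isLt; omega⟩)‖₊ : ENNReal) ^ (2:ℝ) with hGq
  have hFpm : Measurable Fp := by
    refine (Measurable.pow_const ?_ _)
    refine Measurable.coe_nnreal_ennreal (Measurable.nnnorm ?_)
    refine hfm.measurable.comp (measurable_pi_lambda _ fun i => ?_)
    by_cases h : (i : ℕ) < p - r
    · simp only [dif_pos h]; exact (measurable_pi_apply _).comp measurable_fst
    · simp only [dif_neg h]; exact (measurable_pi_apply _).comp measurable_snd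
  have hGqm : Measurable Gq := by
    refine (Measurable.pow_const ?_ _)
    refine Measurable.coe_nnreal_ennreal (Measurable.nnnorm ?_)
    refine hgm.measurable.comp (measurable_pi_lambda _ fun j => ?_)
    by_cases h : (j : ℕ) < q - r
    · simp only [dif_pos h]; exact (measurable_pi_apply _).comp measurable_fst
    · simp only [dif_neg h]; exact (measurable_pi_apply _).comp measurable_snd
  set A' : (Fin (p - r) → A) → ENNReal := fun x₁ => ∫⁻ s : Fin r → A, Fp (x₁, s) ∂νr with hA'
  set B' : (Fin (q - r) → A) → ENNReal := fun x₄ => ∫⁻ s : Fin r → A, Gq (x₄, s) ∂νr with hB'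
  have hA'm : Measurable A' := hFpm.lintegral_prod_right'
  have hB'm : Measurable B' := hGqm.lintegral_prod_right'
  have hA'int : (∫⁻ x₁, A' x₁ ∂(Measure.pi fun _ : Fin (p - r) => μ)) < ⊤ := by
    have heq : (∫⁻ x₁, A' x₁ ∂(Measure.pi fun _ : Fin (p - r) => μ))
        = ∫⁻ z : (Fin (p - r) → A) × (Fin r → A), Fp z
            ∂((Measure.pi fun _ : Fin (p - r) => μ).prod νr) :=
      (lintegral_prod Fp hFpm.aemeasurable).symm
    rw [heq]
    have heq2 := hglueP.lintegral_comp_emb hgluePe (fun u => (‖f u‖₊ : ENNReal) ^ (2:ℝ))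
    rw [show (∫⁻ z : (Fin (p - r) → A) × (Fin r → A), Fp z
            ∂((Measure.pi fun _ : Fin (p - r) => μ).prod νr))
        = ∫⁻ z : (Fin (p - r) → A) × (Fin r → A),
            (fun u : Fin p → A => (‖f u‖₊ : ENNReal) ^ (2:ℝ))
              ((fun z : (Fin (p - r) → A) × (Fin r → A) => fun i : Fin p =>
                if hi : (i : ℕ) < p - r then z.1 ⟨i, hi⟩
                else z.2 ⟨(i : ℕ) - (p - r), by omega⟩) z)
            ∂((Measure.pi fun _ : Fin (p - r) => μ).prod νr) from rfl, heq2]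
    exact hf2
  have hB'int : (∫⁻ x₄, B' x₄ ∂(Measure.pi fun _ : Fin (q - r) => μ)) < ⊤ := by
    have heq : (∫⁻ x₄, B' x₄ ∂(Measure.pi fun _ : Fin (q - r) => μ))
        = ∫⁻ z : (Fin (q - r) → A) × (Fin r → A), Gq z
            ∂((Measure.pi fun _ : Fin (q - r) => μ).prod νr) :=
      (lintegral_prod Gq hGqm.aemeasurable).symm
    rw [heq]
    have heq2 := hglueQ.lintegral_comp_emb hglueQe (fun u => (‖g u‖₊ : ENNReal) ^ (2:ℝ))
    rw [show (∫⁻ z : (Fin (q - r) → A) × (Fin r → A), Gq z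
            ∂((Measure.pi fun _ : Fin (q - r) => μ).prod νr))
        = ∫⁻ z : (Fin (q - r) → A) × (Fin r → A),
            (fun u : Fin q → A => (‖g u‖₊ : ENNReal) ^ (2:ℝ))
              ((fun z : (Fin (q - r) → A) × (Fin r → A) => fun i : Fin q =>
                if hi : (i : ℕ) < q - r then z.1 ⟨i, hi⟩
                else z.2 ⟨(i : ℕ) - (q - r), by omega⟩) z)
            ∂((Measure.pi fun _ : Fin (q - r) => μ).prod νr) from rfl, heq2]
    exact hg2
  -- the main finiteness estimate
  have hfin : (∫⁻ z : (Fin n₀ → A) × ((Fin r → A) × (Fin r → A)),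
      (‖hh (z.1, z.2.1) * hh (z.1, z.2.2)‖₊ : ENNReal) ∂(ν₀.prod (νr.prod νr))) < ⊤ := by
    have step1 : (∫⁻ z : (Fin n₀ → A) × ((Fin r → A) × (Fin r → A)),
        (‖hh (z.1, z.2.1) * hh (z.1, z.2.2)‖₊ : ENNReal) ∂(ν₀.prod (νr.prod νr)))
        = ∫⁻ t, ∫⁻ y : (Fin r → A) × (Fin r → A), φ (t, y.1) * φ (t, y.2)
            ∂(νr.prod νr) ∂ν₀ := by
      have : ∀ z : (Fin n₀ → A) × ((Fin r → A) × (Fin r → A)),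
          (‖hh (z.1, z.2.1) * hh (z.1, z.2.2)‖₊ : ENNReal)
            = φ (z.1, z.2.1) * φ (z.1, z.2.2) := by
        intro z; simp [hφ, nnnorm_mul]
      rw [lintegral_congr this, lintegral_prod]
      exact ((hφm.comp hm1).mul (hφm.comp hm2)).aemeasurable
    have step2 : ∀ t, (∫⁻ y : (Fin r → A) × (Fin r → A), φ (t, y.1) * φ (t, y.2)
        ∂(νr.prod νr)) = (∫⁻ s, φ (t, s) ∂νr) * (∫⁻ s, φ (t, s) ∂νr) := by
      intro t
      have hsec : Measurable (fun s : Fin r → A => φ (t, s)) :=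
        hφm.comp (measurable_const.prodMk measurable_id)
      exact lintegral_prod_mul hsec.aemeasurable hsec.aemeasurable
    rw [step1]
    simp_rw [step2]
    calc (∫⁻ t, (∫⁻ s, φ (t, s) ∂νr) * (∫⁻ s, φ (t, s) ∂νr) ∂ν₀)
        ≤ ∫⁻ t, α t * β t ∂ν₀ := lintegral_mono hCS
      _ = ∫⁻ z : (Fin (p - r) → A) × (Fin (q - r) → A),
            α ((fun z : (Fin (p - r) → A) × (Fin (q - r) → A) => fun i : Fin n₀ =>
              if hi : (i : ℕ) < p - r then z.1 ⟨i, hi⟩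
              else z.2 ⟨(i : ℕ) - (p - r), by omega⟩) z)
            * β ((fun z : (Fin (p - r) → A) × (Fin (q - r) → A) => fun i : Fin n₀ =>
              if hi : (i : ℕ) < p - r then z.1 ⟨i, hi⟩
              else z.2 ⟨(i : ℕ) - (p - r), by omega⟩) z)
            ∂((Measure.pi fun _ : Fin (p - r) => μ).prod (Measure.pi fun _ : Fin (q - r) => μ)) :=
          (hglue0.lintegral_comp_emb hglue0e (fun t => α t * β t)).symm
      _ = ∫⁻ z : (Fin (p - r) → A) × (Fin (q - r) → A), A' z.1 * B' z.2
            ∂((Measure.pi fun _ : Fin (p - r) => μ).prod (Measure.pi fun _ : Fin (q - r) => μ)) := by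
          apply lintegral_congr
          intro z
          congr 1
          · rw [hα, hA']
            apply lintegral_congr
            intro s
            rw [hclaim1 z.1 z.2 s]
          · rw [hβ, hB']
            apply lintegral_congr
            intro s
            rw [hclaim2 z.1 z.2 s]
      _ = (∫⁻ x₁, A' x₁ ∂(Measure.pi fun _ : Fin (p - r) => μ))
            * (∫⁻ x₄, B' x₄ ∂(Measure.pi fun _ : Fin (q - r) => μ)) :=
          lintegral_prod_mul hA'm.aemeasurable hB'm.aemeasurable
      _ < ⊤ := ENNReal.mul_lt_top hA'int hB'int
  have hIntegrable : Integrable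
      (fun z : (Fin n₀ → A) × ((Fin r → A) × (Fin r → A)) =>
        hh (z.1, z.2.1) * hh (z.1, z.2.2)) (ν₀.prod (νr.prod νr)) :=
    ⟨hFFm.aestronglyMeasurable, hfin⟩
  constructor
  · exact hIntegrable
  · have hstep : (∫ z : (Fin n₀ → A) × ((Fin r → A) × (Fin r → A)),
        hh (z.1, z.2.1) * hh (z.1, z.2.2) ∂(ν₀.prod (νr.prod νr)))
        = ∫ t, (∫ s, hh (t, s) ∂νr) * (∫ s, hh (t, s) ∂νr) ∂ν₀ := by
      rw [integral_prod _ hIntegrable]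
      apply integral_congr_ae
      filter_upwards with t
      exact integral_prod_mul (fun s => hh (t, s)) (fun s => hh (t, s))
    have hcontr : ∀ t, (∫ s, hh (t, s) ∂νr) = contraction μ p q r f g t := fun t => rfl
    calc (∫ z : (Fin n₀ → A) × ((Fin r → A) × (Fin r → A)),
          hh (z.1, z.2.1) * hh (z.1, z.2.2) ∂(ν₀.prod (νr.prod νr)))
        = ∫ t, (∫ s, hh (t, s) ∂νr) * (∫ s, hh (t, s) ∂νr) ∂ν₀ := hstep
      _ = ∫ x, (contraction μ p q r f g x) ^ 2 ∂ν₀ := by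
          apply integral_congr_ae
          filter_upwards with t
          rw [hcontr t, sq]

section maps
def mapa1 (p q r : ℕ) : Fin p → (Fin ((p - r) + (q - r)) ⊕ (Fin r ⊕ Fin r)) := fun i =>
  if h : (i : ℕ) < p - r then Sum.inl ⟨i, by omega⟩
  else Sum.inr (Sum.inl ⟨(i : ℕ) - (p - r), by have := i.isLt; omega⟩)

def mapa2 (p q r : ℕ) : Fin p → (Fin ((p - r) + (q - r)) ⊕ (Fin r ⊕ Fin r)) := fun i =>
  if h : (i : ℕ) < p - r then Sum.inl ⟨i, by omega⟩
  else Sum.inr (Sum.inr ⟨(i : ℕ) - (p - r), by have := i.isLt; omega⟩)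

def mapb1 (p q r : ℕ) : Fin q → (Fin ((p - r) + (q - r)) ⊕ (Fin r ⊕ Fin r)) := fun j =>
  if h : (j : ℕ) < q - r then Sum.inl ⟨(p - r) + (j : ℕ), by omega⟩
  else Sum.inr (Sum.inr ⟨(j : ℕ) - (q - r), by have := j.isLt; omega⟩)

def mapb2 (p q r : ℕ) : Fin q → (Fin ((p - r) + (q - r)) ⊕ (Fin r ⊕ Fin r)) := fun j =>
  if h : (j : ℕ) < q - r then Sum.inl ⟨(p - r) + (j : ℕ), by omega⟩
  else Sum.inr (Sum.inl ⟨(j : ℕ) - (q - r), by have := j.isLt; omega⟩)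

lemma mapa1_inj (p q r : ℕ) : Function.Injective (mapa1 p q r) := by
  intro i i' h
  unfold mapa1 at h
  split_ifs at h with h1 h2 h2 <;>
    simp only [Sum.inl.injEq, Sum.inr.injEq, Fin.mk.injEq] at h <;> exact Fin.ext (by omega)

lemma mapa2_inj (p q r : ℕ) : Function.Injective (mapa2 p q r) := by
  intro i i' h
  unfold mapa2 at h
  split_ifs at h with h1 h2 h2 <;>
    simp only [Sum.inl.injEq, Sum.inr.injEq, Fin.mk.injEq] at h <;> exact Fin.ext (by omega)

lemma mapb1_inj (p q r : ℕ) : Function.Injective (mapb1 p q r) := by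
  intro i i' h
  unfold mapb1 at h
  split_ifs at h with h1 h2 h2 <;>
    simp only [Sum.inl.injEq, Sum.inr.injEq, Fin.mk.injEq] at h <;> exact Fin.ext (by omega)

lemma mapb2_inj (p q r : ℕ) : Function.Injective (mapb2 p q r) := by
  intro i i' h
  unfold mapb2 at h
  split_ifs at h with h1 h2 h2 <;>
    simp only [Sum.inl.injEq, Sum.inr.injEq, Fin.mk.injEq] at h <;> exact Fin.ext (by omega)
end maps

section classify
def ccl (p : ℕ) {m : ℕ} (σ : Equiv.Perm (Fin m)) : Fin m → Bool × Bool :=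
  fun i => (decide ((i : ℕ) < p), decide (((σ.symm i : Fin m) : ℕ) < p))

def ddl (p q r : ℕ) : (Fin ((p - r) + (q - r)) ⊕ (Fin r ⊕ Fin r)) → Bool × Bool :=
  Sum.elim (fun k => (decide ((k : ℕ) < p - r), decide ((k : ℕ) < p - r)))
    (Sum.elim (fun _ => (true, false)) (fun _ => (false, true)))

lemma image_filter_perm {m : ℕ} (σ : Equiv.Perm (Fin m)) (P : Fin m → Prop) [DecidablePred P] :
    (Finset.univ.filter P).image (fun i => σ i)
      = Finset.univ.filter (fun i => P (σ.symm i)) := by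
  ext i
  simp only [Finset.mem_image, Finset.mem_filter, Finset.mem_univ, true_and]
  constructor
  · rintro ⟨j, hj, rfl⟩; simpa using hj
  · intro h; exact ⟨σ.symm i, h, by simp⟩

lemma classify_lemma (p q r : ℕ) (σ : Equiv.Perm (Fin (p + q)))
    (hr : r = ((Finset.univ.filter fun i : Fin (p + q) => (i : ℕ) < p) ∩
        (Finset.univ.filter fun i : Fin (p + q) => p ≤ (i : ℕ)).image (fun i => σ i)).card) :
    r ≤ p ∧ r ≤ q
    ∧ r = ((Finset.univ.filter fun i : Fin (p + q) => p ≤ (i : ℕ)) ∩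
        (Finset.univ.filter fun i : Fin (p + q) => (i : ℕ) < p).image (fun i => σ i)).card
    ∧ ∀ v : Bool × Bool,
        Fintype.card {x : (Fin ((p - r) + (q - r)) ⊕ (Fin r ⊕ Fin r)) // ddl p q r x = v}
          = Fintype.card {i : Fin (p + q) // ccl p σ i = v} := by
  classical
  set P : Fin (p + q) → Prop := fun i => (i : ℕ) < p with hP
  set Q : Fin (p + q) → Prop := fun i => ((σ.symm i : Fin (p + q)) : ℕ) < p with hQ
  set a := (Finset.univ.filter (fun i => P i ∧ Q i)).card with ha
  set b := (Finset.univ.filter (fun i => P i ∧ ¬ Q i)).card with hb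
  set c := (Finset.univ.filter (fun i => ¬ P i ∧ Q i)).card with hc
  set d := (Finset.univ.filter (fun i => ¬ P i ∧ ¬ Q i)).card with hd
  have cardP : (Finset.univ.filter P).card = p := by
    rw [← Fintype.card_subtype]; exact card_fin_lt (p + q) p (by omega)
  have cardQ : (Finset.univ.filter Q).card = p := by
    have himg := image_filter_perm σ P
    have : (Finset.univ.filter P).image (fun i => σ i) = Finset.univ.filter Q := himg
    rw [← this, Finset.card_image_of_injective _ σ.injective, cardP]
  have cardnP : (Finset.univ.filter (fun i => ¬ P i)).card = q := by
    have := Finset.card_filter_add_card_filter_not (s := (Finset.univ : Finset (Fin (p+q)))) P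
    rw [cardP, Finset.card_univ, Fintype.card_fin] at this
    omega
  have splitP : a + b = p := by
    have := Finset.card_filter_add_card_filter_not
      (s := Finset.univ.filter P) Q
    rw [Finset.filter_filter, Finset.filter_filter, cardP] at this
    rw [ha, hb]; exact this
  have splitQ : a + c = p := by
    have := Finset.card_filter_add_card_filter_not
      (s := Finset.univ.filter Q) P
    rw [Finset.filter_filter, Finset.filter_filter, cardQ] at this
    have e1 : (Finset.univ.filter (fun i => Q i ∧ P i)).card = a := by
      rw [ha]; congr 1; ext i; simp [and_comm]
    have e2 : (Finset.univ.filter (fun i => Q i ∧ ¬ P i)).card = c := by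
      rw [hc]; congr 1; ext i; simp [and_comm]
    rw [e1, e2] at this; exact this
  have splitnP : c + d = q := by
    have := Finset.card_filter_add_card_filter_not
      (s := Finset.univ.filter (fun i => ¬ P i)) Q
    rw [Finset.filter_filter, Finset.filter_filter, cardnP] at this
    rw [hc, hd]; exact this
  have hbr : b = r := by
    have himg := image_filter_perm σ (fun i => p ≤ (i : ℕ))
    have hset : (Finset.univ.filter P) ∩
        ((Finset.univ.filter fun i : Fin (p + q) => p ≤ (i : ℕ)).image (fun i => σ i))
        = Finset.univ.filter (fun i => P i ∧ ¬ Q i) := by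
      rw [himg]
      ext i
      simp only [Finset.mem_inter, Finset.mem_filter, Finset.mem_univ, true_and, hP, hQ]
      omega
    rw [hr, hset]
  have hcr : c = r := by omega
  have hrp : r ≤ p := by omega
  have hrq : r ≤ q := by omega
  refine ⟨hrp, hrq, ?_, ?_⟩
  · -- part (i)
    have himg := image_filter_perm σ P
    rw [himg]
    have : (Finset.univ.filter fun i : Fin (p + q) => p ≤ (i : ℕ)) ∩
        (Finset.univ.filter fun i => P (σ.symm i))
        = Finset.univ.filter (fun i => ¬ P i ∧ Q i) := by
      ext i
      simp only [Finset.mem_inter, Finset.mem_filter, Finset.mem_univ, true_and, hP, hQ]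
      omega
    rw [this]; omega
  · -- fiber cardinalities
    have cc_tt : Fintype.card {i : Fin (p + q) // ccl p σ i = (true, true)} = a := by
      rw [ha, ← Fintype.card_subtype]
      exact Fintype.card_congr (Equiv.subtypeEquivRight (by
        intro i; simp [ccl, Prod.ext_iff, hP, hQ]))
    have cc_tf : Fintype.card {i : Fin (p + q) // ccl p σ i = (true, false)} = b := by
      rw [hb, ← Fintype.card_subtype]
      exact Fintype.card_congr (Equiv.subtypeEquivRight (by
        intro i; simp [ccl, Prod.ext_iff, hP, hQ]))
    have cc_ft : Fintype.card {i : Fin (p + q) // ccl p σ i = (false, true)} = c := by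
      rw [hc, ← Fintype.card_subtype]
      exact Fintype.card_congr (Equiv.subtypeEquivRight (by
        intro i; simp [ccl, Prod.ext_iff, hP, hQ]))
    have cc_ff : Fintype.card {i : Fin (p + q) // ccl p σ i = (false, false)} = d := by
      rw [hd, ← Fintype.card_subtype]
      exact Fintype.card_congr (Equiv.subtypeEquivRight (by
        intro i; simp [ccl, Prod.ext_iff, hP, hQ]))
    -- dd side: generic computation
    have ddcard : ∀ v : Bool × Bool,
        Fintype.card {x : (Fin ((p - r) + (q - r)) ⊕ (Fin r ⊕ Fin r)) // ddl p q r x = v}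
          = Fintype.card {k : Fin ((p - r) + (q - r)) // ddl p q r (Sum.inl k) = v}
            + (Fintype.card {x : Fin r // ddl p q r (Sum.inr (Sum.inl x)) = v}
              + Fintype.card {x : Fin r // ddl p q r (Sum.inr (Sum.inr x)) = v}) := by
      intro v
      rw [Fintype.card_congr (Equiv.subtypeSum (p := fun x => ddl p q r x = v))]
      rw [Fintype.card_sum]
      congr 1
      rw [Fintype.card_congr (Equiv.subtypeSum
        (p := fun x : Fin r ⊕ Fin r => ddl p q r (Sum.inr x) = v))]
      rw [Fintype.card_sum]
    intro v
    rcases v with ⟨v1, v2⟩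
    cases v1 <;> cases v2 <;> rw [ddcard]
    · -- (false, false)
      rw [cc_ff]
      have e1 : Fintype.card {k : Fin ((p - r) + (q - r)) // ddl p q r (Sum.inl k) = (false, false)}
          = Fintype.card {k : Fin ((p - r) + (q - r)) // ¬ ((k : ℕ) < p - r)} :=
        Fintype.card_congr (Equiv.subtypeEquivRight (by intro k; simp [ddl]))
      rw [e1, Fintype.card_subtype_compl, card_fin_lt _ _ (by omega), Fintype.card_fin]
      have e2 : Fintype.card {x : Fin r // ddl p q r (Sum.inr (Sum.inl x)) = (false, false)} = 0 :=
        Fintype.card_eq_zero_iff.mpr ⟨fun x => by have := x.2; simp [ddl] at this⟩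
      have e3 : Fintype.card {x : Fin r // ddl p q r (Sum.inr (Sum.inr x)) = (false, false)} = 0 :=
        Fintype.card_eq_zero_iff.mpr ⟨fun x => by have := x.2; simp [ddl] at this⟩
      rw [e2, e3]; omega
    · -- (false, true)
      rw [cc_ft]
      have e1 : Fintype.card {k : Fin ((p - r) + (q - r)) // ddl p q r (Sum.inl k) = (false, true)} = 0 :=
        Fintype.card_eq_zero_iff.mpr ⟨fun x => by
          have := x.2; simp [ddl, Prod.ext_iff] at this; omega⟩
      have e2 : Fintype.card {x : Fin r // ddl p q r (Sum.inr (Sum.inl x)) = (false, true)} = 0 :=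
        Fintype.card_eq_zero_iff.mpr ⟨fun x => by have := x.2; simp [ddl] at this⟩
      have e3 : Fintype.card {x : Fin r // ddl p q r (Sum.inr (Sum.inr x)) = (false, true)} = r := by
        rw [Fintype.card_congr (Equiv.subtypeUnivEquiv (by simp [ddl]))]
        exact Fintype.card_fin r
      rw [e1, e2, e3]; omega
    · -- (true, false)
      rw [cc_tf]
      have e1 : Fintype.card {k : Fin ((p - r) + (q - r)) // ddl p q r (Sum.inl k) = (true, false)} = 0 :=
        Fintype.card_eq_zero_iff.mpr ⟨fun x => by
          have := x.2; simp [ddl, Prod.ext_iff] at this; omega⟩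
      have e2 : Fintype.card {x : Fin r // ddl p q r (Sum.inr (Sum.inl x)) = (true, false)} = r := by
        rw [Fintype.card_congr (Equiv.subtypeUnivEquiv (by simp [ddl]))]
        exact Fintype.card_fin r
      have e3 : Fintype.card {x : Fin r // ddl p q r (Sum.inr (Sum.inr x)) = (true, false)} = 0 :=
        Fintype.card_eq_zero_iff.mpr ⟨fun x => by have := x.2; simp [ddl] at this⟩
      rw [e1, e2, e3]; omega
    · -- (true, true)
      rw [cc_tt]
      have e1 : Fintype.card {k : Fin ((p - r) + (q - r)) // ddl p q r (Sum.inl k) = (true, true)}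
          = Fintype.card {k : Fin ((p - r) + (q - r)) // (k : ℕ) < p - r} :=
        Fintype.card_congr (Equiv.subtypeEquivRight (by intro k; simp [ddl]))
      rw [e1, card_fin_lt _ _ (by omega)]
      have e2 : Fintype.card {x : Fin r // ddl p q r (Sum.inr (Sum.inl x)) = (true, true)} = 0 :=
        Fintype.card_eq_zero_iff.mpr ⟨fun x => by have := x.2; simp [ddl] at this⟩
      have e3 : Fintype.card {x : Fin r // ddl p q r (Sum.inr (Sum.inr x)) = (true, true)} = 0 :=
        Fintype.card_eq_zero_iff.mpr ⟨fun x => by have := x.2; simp [ddl] at this⟩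
      rw [e2, e3]; omega
end classify

section ranges
lemma range_helper {I J : Type*} (τ : I ≃ J) (dd : I → Bool × Bool) (cc : J → Bool × Bool)
    (hτ : ∀ x, cc (τ x) = dd x) {n : ℕ} (u : Fin n → I) (v : Fin n → J)
    (K : Bool × Bool → Prop)
    (hu : ∀ x : I, K (dd x) ↔ x ∈ Set.range u) (hv : ∀ y : J, K (cc y) ↔ y ∈ Set.range v) :
    Set.range (fun i => τ (u i)) = Set.range v := by
  ext y
  constructor
  · rintro ⟨i, rfl⟩
    rw [← hv, hτ, hu]; exact ⟨i, rfl⟩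
  · intro hy
    have : K (dd (τ.symm y)) := by
      rw [← hτ, Equiv.apply_symm_apply, hv]; exact hy
    obtain ⟨x, hx⟩ := (hu _).mp this
    exact ⟨x, show τ (u x) = y by rw [hx]; exact Equiv.apply_symm_apply τ y⟩

variable {p q r : ℕ}

lemma mem_range_mapa1 (hrp : r ≤ p) (x : Fin ((p - r) + (q - r)) ⊕ (Fin r ⊕ Fin r)) :
    (ddl p q r x).1 = true ↔ x ∈ Set.range (mapa1 p q r) := by
  rcases x with k | a | b
  · constructor
    · intro h
      have hk : (k : ℕ) < p - r := by simpa [ddl] using h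
      refine ⟨⟨(k : ℕ), by omega⟩, ?_⟩
      simp only [mapa1, dif_pos hk]
    · rintro ⟨i, hi⟩
      simp only [mapa1] at hi
      split_ifs at hi with h
      all_goals first
        | exact Sum.noConfusion hi
        | (simp only [Sum.inl.injEq] at hi; subst hi; simpa [ddl] using h)
  · constructor
    · intro _
      refine ⟨⟨(p - r) + (a : ℕ), by omega⟩, ?_⟩
      simp only [mapa1, dif_neg (by omega : ¬ ((p - r) + (a : ℕ) < p - r))]
      congr 2; exact Fin.ext (by simp)
    · intro _; simp [ddl]
  · constructor
    · intro h; simp [ddl] at h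
    · rintro ⟨i, hi⟩
      simp only [mapa1] at hi
      split_ifs at hi <;> simp at hi

lemma mem_range_mapa2 (hrp : r ≤ p) (x : Fin ((p - r) + (q - r)) ⊕ (Fin r ⊕ Fin r)) :
    (ddl p q r x).2 = true ↔ x ∈ Set.range (mapa2 p q r) := by
  rcases x with k | a | b
  · constructor
    · intro h
      have hk : (k : ℕ) < p - r := by simpa [ddl] using h
      refine ⟨⟨(k : ℕ), by omega⟩, ?_⟩
      simp only [mapa2, dif_pos hk]
    · rintro ⟨i, hi⟩
      simp only [mapa2] at hi
      split_ifs at hi with h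
      all_goals first
        | exact Sum.noConfusion hi
        | (simp only [Sum.inl.injEq] at hi; subst hi; simpa [ddl] using h)
  · constructor
    · intro h; simp [ddl] at h
    · rintro ⟨i, hi⟩
      simp only [mapa2] at hi
      split_ifs at hi <;> simp at hi
  · constructor
    · intro _
      refine ⟨⟨(p - r) + (b : ℕ), by omega⟩, ?_⟩
      simp only [mapa2, dif_neg (by omega : ¬ ((p - r) + (b : ℕ) < p - r))]
      congr 2; exact Fin.ext (by simp)
    · intro _; simp [ddl]

lemma mem_range_mapb1 (hrq : r ≤ q) (x : Fin ((p - r) + (q - r)) ⊕ (Fin r ⊕ Fin r)) :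
    (ddl p q r x).1 = false ↔ x ∈ Set.range (mapb1 p q r) := by
  rcases x with k | a | b
  · constructor
    · intro h
      have hk : ¬ ((k : ℕ) < p - r) := by simpa [ddl] using h
      refine ⟨⟨(k : ℕ) - (p - r), by have := k.isLt; omega⟩, ?_⟩
      simp only [mapb1, dif_pos (show ((k : ℕ) - (p - r)) < q - r by have := k.isLt; omega)]
      congr 1; exact Fin.ext (by simp; omega)
    · rintro ⟨j, hj⟩
      simp only [mapb1] at hj
      split_ifs at hj with h
      all_goals first
        | exact Sum.noConfusion hj
        | (simp only [Sum.inl.injEq] at hj; subst hj; simp [ddl])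
  · constructor
    · intro h; simp [ddl] at h
    · rintro ⟨j, hj⟩
      simp only [mapb1] at hj
      split_ifs at hj <;> simp at hj
  · constructor
    · intro _
      refine ⟨⟨(q - r) + (b : ℕ), by omega⟩, ?_⟩
      simp only [mapb1, dif_neg (by omega : ¬ ((q - r) + (b : ℕ) < q - r))]
      congr 2; exact Fin.ext (by simp)
    · intro _; simp [ddl]

lemma mem_range_mapb2 (hrq : r ≤ q) (x : Fin ((p - r) + (q - r)) ⊕ (Fin r ⊕ Fin r)) :
    (ddl p q r x).2 = false ↔ x ∈ Set.range (mapb2 p q r) := by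
  rcases x with k | a | b
  · constructor
    · intro h
      have hk : ¬ ((k : ℕ) < p - r) := by simpa [ddl] using h
      refine ⟨⟨(k : ℕ) - (p - r), by have := k.isLt; omega⟩, ?_⟩
      simp only [mapb2, dif_pos (show ((k : ℕ) - (p - r)) < q - r by have := k.isLt; omega)]
      congr 1; exact Fin.ext (by simp; omega)
    · rintro ⟨j, hj⟩
      simp only [mapb2] at hj
      split_ifs at hj with h
      all_goals first
        | exact Sum.noConfusion hj
        | (simp only [Sum.inl.injEq] at hj; subst hj; simp [ddl])
  · constructor
    · intro _
      refine ⟨⟨(q - r) + (a : ℕ), by omega⟩, ?_⟩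
      simp only [mapb2, dif_neg (by omega : ¬ ((q - r) + (a : ℕ) < q - r))]
      congr 2; exact Fin.ext (by simp)
    · intro _; simp [ddl]
  · constructor
    · intro h; simp [ddl] at h
    · rintro ⟨j, hj⟩
      simp only [mapb2] at hj
      split_ifs at hj <;> simp at hj

variable {m' : ℕ}

lemma mem_range_castAdd (σ : Equiv.Perm (Fin (p + q))) (y : Fin (p + q)) :
    (ccl p σ y).1 = true ↔ y ∈ Set.range (Fin.castAdd q : Fin p → Fin (p + q)) := by
  simp only [ccl, decide_eq_true_eq]
  constructor
  · intro h; exact ⟨⟨(y : ℕ), h⟩, Fin.ext rfl⟩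
  · rintro ⟨i, rfl⟩; simp

lemma mem_range_natAdd (σ : Equiv.Perm (Fin (p + q))) (y : Fin (p + q)) :
    (ccl p σ y).1 = false ↔ y ∈ Set.range (Fin.natAdd p : Fin q → Fin (p + q)) := by
  simp only [ccl, decide_eq_false_iff_not, not_lt]
  constructor
  · intro h; exact ⟨⟨(y : ℕ) - p, by have := y.isLt; omega⟩, Fin.ext (by simp; omega)⟩
  · rintro ⟨j, rfl⟩; simp
lemma mem_range_sigma_castAdd (σ : Equiv.Perm (Fin (p + q))) (y : Fin (p + q)) :
    (ccl p σ y).2 = true ↔ y ∈ Set.range (fun i : Fin p => σ (Fin.castAdd q i)) := by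
  simp only [ccl, decide_eq_true_eq]
  constructor
  · intro h
    have hcast : (Fin.castAdd q ⟨((σ.symm y : Fin (p + q)) : ℕ), h⟩) = σ.symm y :=
      Fin.ext (by simp)
    exact ⟨⟨((σ.symm y : Fin (p + q)) : ℕ), h⟩,
      show σ (Fin.castAdd q ⟨((σ.symm y : Fin (p + q)) : ℕ), h⟩) = y by
        rw [hcast]; exact Equiv.apply_symm_apply σ y⟩
  · rintro ⟨i, rfl⟩; simp

lemma mem_range_sigma_natAdd (σ : Equiv.Perm (Fin (p + q))) (y : Fin (p + q)) :
    (ccl p σ y).2 = false ↔ y ∈ Set.range (fun j : Fin q => σ (Fin.natAdd p j)) := by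
  simp only [ccl, decide_eq_false_iff_not, not_lt]
  constructor
  · intro h
    have hcast : (Fin.natAdd p ⟨((σ.symm y : Fin (p + q)) : ℕ) - p, by
        have := (σ.symm y).isLt; omega⟩) = σ.symm y := Fin.ext (by simp; omega)
    exact ⟨⟨((σ.symm y : Fin (p + q)) : ℕ) - p, by have := (σ.symm y).isLt; omega⟩,
      show σ (Fin.natAdd p ⟨((σ.symm y : Fin (p + q)) : ℕ) - p, by
          have := (σ.symm y).isLt; omega⟩) = y by
        rw [hcast]; exact Equiv.apply_symm_apply σ y⟩
  · rintro ⟨j, rfl⟩; simp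

lemma natAdd_inj (p q : ℕ) : Function.Injective (Fin.natAdd p : Fin q → Fin (p + q)) := by
  intro a b h
  have := congrArg (fun x : Fin (p + q) => (x : ℕ)) h
  simp at this
  exact Fin.ext this
end ranges

set_option maxHeartbeats 2000000 in
theorem main_aux {A : Type*} [MeasurableSpace A] (μ : Measure A) [SigmaFinite μ]
    (p q : ℕ)
    (f : (Fin p → A) → ℝ) (g : (Fin q → A) → ℝ)
    (hfm : StronglyMeasurable f) (hgm : StronglyMeasurable g)
    (hf : MemLp f 2 (Measure.pi fun _ : Fin p => μ))
    (hg : MemLp g 2 (Measure.pi fun _ : Fin q => μ))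
    (hfsymm : ∀ π : Equiv.Perm (Fin p),
      ∀ᵐ t ∂(Measure.pi fun _ : Fin p => μ), f (fun i => t (π i)) = f t)
    (hgsymm : ∀ π : Equiv.Perm (Fin q),
      ∀ᵐ t ∂(Measure.pi fun _ : Fin q => μ), g (fun i => t (π i)) = g t)
    (σ : Equiv.Perm (Fin (p + q))) (r : ℕ)
    (hr : r = ((Finset.univ.filter fun i : Fin (p + q) => (i : ℕ) < p) ∩
        (Finset.univ.filter fun i : Fin (p + q) => p ≤ (i : ℕ)).image (fun i => σ i)).card) :
    r = ((Finset.univ.filter fun i : Fin (p + q) => p ≤ (i : ℕ)) ∩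
        (Finset.univ.filter fun i : Fin (p + q) => (i : ℕ) < p).image (fun i => σ i)).card
    ∧ Integrable
        (fun t : Fin (p + q) → A =>
          f (fun i => t (Fin.castAdd q i)) * g (fun j => t (Fin.natAdd p j)) *
            f (fun i => t (σ (Fin.castAdd q i))) * g (fun j => t (σ (Fin.natAdd p j))))
        (Measure.pi fun _ : Fin (p + q) => μ)
    ∧ (∫ t : Fin (p + q) → A,
          f (fun i => t (Fin.castAdd q i)) * g (fun j => t (Fin.natAdd p j)) *
            f (fun i => t (σ (Fin.castAdd q i))) * g (fun j => t (σ (Fin.natAdd p j)))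
          ∂(Measure.pi fun _ : Fin (p + q) => μ))
        = ∫ x : Fin ((p - r) + (q - r)) → A, (contraction μ p q r f g x) ^ 2
            ∂(Measure.pi fun _ : Fin ((p - r) + (q - r)) => μ) := by
  classical
  obtain ⟨hrp, hrq, hpart1, hfib⟩ := classify_lemma p q r σ hr
  set τ : (Fin ((p - r) + (q - r)) ⊕ (Fin r ⊕ Fin r)) ≃ Fin (p + q) :=
    Equiv.ofFiberEquiv (f := ddl p q r) (g := ccl p σ)
      (fun v => Fintype.equivOfCardEq (hfib v)) with hτdef
  have hτ : ∀ x, ccl p σ (τ x) = ddl p q r x := fun x => Equiv.ofFiberEquiv_map _ x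
  obtain ⟨π₁, hπ₁⟩ := exists_perm_comp (τ.injective.comp (mapa1_inj p q r))
    (Fin.castAdd_injective p q)
    (range_helper τ _ _ hτ _ _ (fun vb => vb.1 = true)
      (mem_range_mapa1 hrp) (mem_range_castAdd σ))
  obtain ⟨π₂, hπ₂⟩ := exists_perm_comp (τ.injective.comp (mapb1_inj p q r))
    (natAdd_inj p q)
    (range_helper τ _ _ hτ _ _ (fun vb => vb.1 = false)
      (mem_range_mapb1 hrq) (mem_range_natAdd σ))
  obtain ⟨π₃, hπ₃⟩ := exists_perm_comp (τ.injective.comp (mapa2_inj p q r))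
    (σ.injective.comp (Fin.castAdd_injective p q))
    (range_helper τ _ _ hτ _ _ (fun vb => vb.2 = true)
      (mem_range_mapa2 hrp) (mem_range_sigma_castAdd σ))
  obtain ⟨π₄, hπ₄⟩ := exists_perm_comp (τ.injective.comp (mapb2_inj p q r))
    (σ.injective.comp (natAdd_inj p q))
    (range_helper τ _ _ hτ _ _ (fun vb => vb.2 = false)
      (mem_range_mapb2 hrq) (mem_range_sigma_natAdd σ))
  -- a.e. identities removing the inner permutations
  have hae1 : ∀ᵐ u ∂(Measure.pi fun _ : Fin (p + q) => μ),
      f (fun i => u (Fin.castAdd q i)) = f (fun i => u (τ (mapa1 p q r i))) := by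
    have h := ae_comp_inj μ (τ.injective.comp (mapa1_inj p q r)) (hfsymm π₁)
    filter_upwards [h] with u hu
    have hu' : f (fun i => u (τ (mapa1 p q r (π₁ i))))
        = f (fun i' => u (τ (mapa1 p q r i'))) := hu
    rw [← hu']
    congr 1
    funext i
    exact (congrArg u (hπ₁ i)).symm
  have hae2 : ∀ᵐ u ∂(Measure.pi fun _ : Fin (p + q) => μ),
      g (fun j => u (Fin.natAdd p j)) = g (fun j => u (τ (mapb1 p q r j))) := by
    have h := ae_comp_inj μ (τ.injective.comp (mapb1_inj p q r)) (hgsymm π₂)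
    filter_upwards [h] with u hu
    have hu' : g (fun j => u (τ (mapb1 p q r (π₂ j))))
        = g (fun j' => u (τ (mapb1 p q r j'))) := hu
    rw [← hu']
    congr 1
    funext j
    exact (congrArg u (hπ₂ j)).symm
  have hae3 : ∀ᵐ u ∂(Measure.pi fun _ : Fin (p + q) => μ),
      f (fun i => u (σ (Fin.castAdd q i))) = f (fun i => u (τ (mapa2 p q r i))) := by
    have h := ae_comp_inj μ (τ.injective.comp (mapa2_inj p q r)) (hfsymm π₃)
    filter_upwards [h] with u hu
    have hu' : f (fun i => u (τ (mapa2 p q r (π₃ i))))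
        = f (fun i' => u (τ (mapa2 p q r i'))) := hu
    rw [← hu']
    congr 1
    funext i
    exact (congrArg u (hπ₃ i)).symm
  have hae4 : ∀ᵐ u ∂(Measure.pi fun _ : Fin (p + q) => μ),
      g (fun j => u (σ (Fin.natAdd p j))) = g (fun j => u (τ (mapb2 p q r j))) := by
    have h := ae_comp_inj μ (τ.injective.comp (mapb2_inj p q r)) (hgsymm π₄)
    filter_upwards [h] with u hu
    have hu' : g (fun j => u (τ (mapb2 p q r (π₄ j))))
        = g (fun j' => u (τ (mapb2 p q r j'))) := hu
    rw [← hu']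
    congr 1
    funext j
    exact (congrArg u (hπ₄ j)).symm
  -- transfer along the measurable equivalence induced by τ
  set Eqv := (MeasurableEquiv.piCongrLeft (fun _ : Fin (p + q) => A) τ).symm with hEqvdef
  have hEqv : ∀ (u : Fin (p + q) → A) (x), Eqv u x = u (τ x) := fun u x => rfl
  have MP_E : MeasurePreserving Eqv (Measure.pi fun _ : Fin (p + q) => μ)
      (Measure.pi fun _ : (Fin ((p - r) + (q - r)) ⊕ (Fin r ⊕ Fin r)) => μ) :=
    (measurePreserving_piCongrLeft (fun _ : Fin (p + q) => μ) τ).symm _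
  set G : ((Fin ((p - r) + (q - r)) ⊕ (Fin r ⊕ Fin r)) → A) → ℝ := fun w =>
    f (fun i => w (mapa1 p q r i)) * g (fun j => w (mapb1 p q r j)) *
      f (fun i => w (mapa2 p q r i)) * g (fun j => w (mapb2 p q r j)) with hGdef
  have haeF : (fun u : Fin (p + q) → A =>
      f (fun i => u (Fin.castAdd q i)) * g (fun j => u (Fin.natAdd p j)) *
        f (fun i => u (σ (Fin.castAdd q i))) * g (fun j => u (σ (Fin.natAdd p j))))
      =ᵐ[Measure.pi fun _ : Fin (p + q) => μ] (fun u => G (Eqv u)) := by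
    filter_upwards [hae1, hae2, hae3, hae4] with u h1 h2 h3 h4
    have hGE : G (Eqv u) = f (fun i => u (τ (mapa1 p q r i))) *
        g (fun j => u (τ (mapb1 p q r j))) * f (fun i => u (τ (mapa2 p q r i))) *
        g (fun j => u (τ (mapb2 p q r j))) := rfl
    rw [hGE, ← h1, ← h2, ← h3, ← h4]
  -- transfer along the product splitting
  set Weq := ((MeasurableEquiv.prodCongr
      (MeasurableEquiv.refl (Fin ((p - r) + (q - r)) → A))
      (MeasurableEquiv.sumPiEquivProdPi (fun _ : Fin r ⊕ Fin r => A)).symm).trans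
      (MeasurableEquiv.sumPiEquivProdPi
        (fun _ : (Fin ((p - r) + (q - r)) ⊕ (Fin r ⊕ Fin r)) => A)).symm) with hWdef
  have MP_W : MeasurePreserving Weq
      ((Measure.pi fun _ : Fin ((p - r) + (q - r)) => μ).prod
        ((Measure.pi fun _ : Fin r => μ).prod (Measure.pi fun _ : Fin r => μ)))
      (Measure.pi fun _ : (Fin ((p - r) + (q - r)) ⊕ (Fin r ⊕ Fin r)) => μ) := by
    have hcoe : ⇑Weq = (⇑(MeasurableEquiv.sumPiEquivProdPi
        (fun _ : (Fin ((p - r) + (q - r)) ⊕ (Fin r ⊕ Fin r)) => A)).symm) ∘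
        (Prod.map id ⇑(MeasurableEquiv.sumPiEquivProdPi (fun _ : Fin r ⊕ Fin r => A)).symm) := by
      funext z; rfl
    rw [hcoe]
    exact MeasurePreserving.comp
      (measurePreserving_sumPiEquivProdPi_symm
        (fun _ : (Fin ((p - r) + (q - r)) ⊕ (Fin r ⊕ Fin r)) => μ))
      ((MeasurePreserving.id _).prod
        (measurePreserving_sumPiEquivProdPi_symm (fun _ : Fin r ⊕ Fin r => μ)))
  have hGW : ∀ z : (Fin ((p - r) + (q - r)) → A) × ((Fin r → A) × (Fin r → A)),
      G (Weq z) = (f (glueA p q r z.1 z.2.1) * g (glueB p q r z.1 z.2.1)) *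
        (f (glueA p q r z.1 z.2.2) * g (glueB p q r z.1 z.2.2)) := by
    intro z
    have e1 : (fun i => Weq z (mapa1 p q r i)) = glueA p q r z.1 z.2.1 := by
      funext i
      by_cases h : (i : ℕ) < p - r
      · simp only [mapa1, glueA, dif_pos h]
        exact congrArg z.1 (Fin.ext (by simp))
      · simp only [mapa1, glueA, dif_neg h]
        rfl
    have e2 : (fun j => Weq z (mapb1 p q r j)) = glueB p q r z.1 z.2.2 := by
      funext j
      by_cases h : (j : ℕ) < q - r
      · simp only [mapb1, glueB, dif_pos h]
        exact congrArg z.1 (Fin.ext (by simp))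
      · simp only [mapb1, glueB, dif_neg h]
        rfl
    have e3 : (fun i => Weq z (mapa2 p q r i)) = glueA p q r z.1 z.2.2 := by
      funext i
      by_cases h : (i : ℕ) < p - r
      · simp only [mapa2, glueA, dif_pos h]
        exact congrArg z.1 (Fin.ext (by simp))
      · simp only [mapa2, glueA, dif_neg h]
        rfl
    have e4 : (fun j => Weq z (mapb2 p q r j)) = glueB p q r z.1 z.2.1 := by
      funext j
      by_cases h : (j : ℕ) < q - r
      · simp only [mapb2, glueB, dif_pos h]
        exact congrArg z.1 (Fin.ext (by simp))
      · simp only [mapb2, glueB, dif_neg h]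
        rfl
    show f (fun i => Weq z (mapa1 p q r i)) * g (fun j => Weq z (mapb1 p q r j)) *
        f (fun i => Weq z (mapa2 p q r i)) * g (fun j => Weq z (mapb2 p q r j)) = _
    rw [e1, e2, e3, e4]
    ring
  have core := core_lemma μ p q r hrp hrq f g hfm hgm hf hg
  have hGWfun : (G ∘ Weq) = (fun z : (Fin ((p - r) + (q - r)) → A) ×
      ((Fin r → A) × (Fin r → A)) =>
      (f (glueA p q r z.1 z.2.1) * g (glueB p q r z.1 z.2.1)) *
        (f (glueA p q r z.1 z.2.2) * g (glueB p q r z.1 z.2.2))) := funext hGW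
  have hGint : Integrable G
      (Measure.pi fun _ : (Fin ((p - r) + (q - r)) ⊕ (Fin r ⊕ Fin r)) => μ) := by
    rw [← MP_W.integrable_comp_emb Weq.measurableEmbedding]
    rw [hGWfun]
    exact core.1
  have hGEint : Integrable (fun u => G (Eqv u)) (Measure.pi fun _ : Fin (p + q) => μ) := by
    have := (MP_E.integrable_comp_emb Eqv.measurableEmbedding (g := G)).mpr hGint
    exact this
  refine ⟨hpart1, (integrable_congr haeF).mpr hGEint, ?_⟩
  calc (∫ u : Fin (p + q) → A,
        f (fun i => u (Fin.castAdd q i)) * g (fun j => u (Fin.natAdd p j)) *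
          f (fun i => u (σ (Fin.castAdd q i))) * g (fun j => u (σ (Fin.natAdd p j)))
        ∂(Measure.pi fun _ : Fin (p + q) => μ))
      = ∫ u, G (Eqv u) ∂(Measure.pi fun _ : Fin (p + q) => μ) := integral_congr_ae haeF
    _ = ∫ w, G w ∂(Measure.pi fun _ : (Fin ((p - r) + (q - r)) ⊕ (Fin r ⊕ Fin r)) => μ) :=
        MP_E.integral_comp Eqv.measurableEmbedding G
    _ = ∫ z, G (Weq z)
          ∂((Measure.pi fun _ : Fin ((p - r) + (q - r)) => μ).prod
            ((Measure.pi fun _ : Fin r => μ).prod (Measure.pi fun _ : Fin r => μ))) :=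
        (MP_W.integral_comp Weq.measurableEmbedding G).symm
    _ = ∫ z : (Fin ((p - r) + (q - r)) → A) × ((Fin r → A) × (Fin r → A)),
          (f (glueA p q r z.1 z.2.1) * g (glueB p q r z.1 z.2.1)) *
            (f (glueA p q r z.1 z.2.2) * g (glueB p q r z.1 z.2.2))
          ∂((Measure.pi fun _ : Fin ((p - r) + (q - r)) => μ).prod
            ((Measure.pi fun _ : Fin r => μ).prod (Measure.pi fun _ : Fin r => μ))) := by
        exact integral_congr_ae (Filter.Eventually.of_forall hGW)
    _ = ∫ x : Fin ((p - r) + (q - r)) → A, (contraction μ p q r f g x) ^ 2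
          ∂(Measure.pi fun _ : Fin ((p - r) + (q - r)) => μ) := core.2

section final
def eAmap (p q r : ℕ) : Fin p → (Fin ((p - r) + (q - r)) ⊕ Fin r) := fun i =>
  if h : (i : ℕ) < p - r then Sum.inl ⟨i, by omega⟩
  else Sum.inr ⟨(i : ℕ) - (p - r), by have := i.isLt; omega⟩

def eBmap (p q r : ℕ) : Fin q → (Fin ((p - r) + (q - r)) ⊕ Fin r) := fun j =>
  if h : (j : ℕ) < q - r then Sum.inl ⟨(p - r) + (j : ℕ), by omega⟩
  else Sum.inr ⟨(j : ℕ) - (q - r), by have := j.isLt; omega⟩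

lemma eAmap_inj (p q r : ℕ) : Function.Injective (eAmap p q r) := by
  intro i i' h
  unfold eAmap at h
  split_ifs at h with h1 h2 h2 <;>
    simp only [Sum.inl.injEq, Sum.inr.injEq, Fin.mk.injEq] at h <;> exact Fin.ext (by omega)

lemma eBmap_inj (p q r : ℕ) : Function.Injective (eBmap p q r) := by
  intro i i' h
  unfold eBmap at h
  split_ifs at h with h1 h2 h2 <;>
    simp only [Sum.inl.injEq, Sum.inr.injEq, Fin.mk.injEq] at h <;> exact Fin.ext (by omega)


/-- **Identity (2.8) of Nourdin–Rosiński**: for symmetric `f ∈ L²(μ^p)`, `g ∈ L²(μ^q)`,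
a permutation `σ` of `{1,…,p+q}`, and `r` the cardinality of
`{1,…,p} ∩ {σ(p+1),…,σ(p+q)}`: (i) `r` also equals the cardinality of
`{p+1,…,p+q} ∩ {σ(1),…,σ(p)}`, and (ii) the function
`t ↦ f(t₁,…,t_p) g(t_{p+1},…,t_{p+q}) f(t_{σ(1)},…,t_{σ(p)}) g(t_{σ(p+1)},…,t_{σ(p+q)})`
is `μ^{p+q}`-integrable with integral `‖f ⊗_r g‖²`. -/
theorem integral_perm_product_eq_norm_sq_contraction
    {A : Type*} [MeasurableSpace A] (μ : Measure A) [SigmaFinite μ]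
    (p q : ℕ) (hp : 1 ≤ p) (hq : 1 ≤ q)
    (f : (Fin p → A) → ℝ) (g : (Fin q → A) → ℝ)
    (hf : MemLp f 2 (Measure.pi fun _ : Fin p => μ))
    (hg : MemLp g 2 (Measure.pi fun _ : Fin q => μ))
    (hfsymm : ∀ σ : Equiv.Perm (Fin p),
      ∀ᵐ t ∂(Measure.pi fun _ : Fin p => μ), f (fun i => t (σ i)) = f t)
    (hgsymm : ∀ σ : Equiv.Perm (Fin q),
      ∀ᵐ t ∂(Measure.pi fun _ : Fin q => μ), g (fun i => t (σ i)) = g t)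
    (σ : Equiv.Perm (Fin (p + q))) (r : ℕ)
    (hr : r = ((Finset.univ.filter fun i : Fin (p + q) => (i : ℕ) < p) ∩
        (Finset.univ.filter fun i : Fin (p + q) => p ≤ (i : ℕ)).image (fun i => σ i)).card) :
    r = ((Finset.univ.filter fun i : Fin (p + q) => p ≤ (i : ℕ)) ∩
        (Finset.univ.filter fun i : Fin (p + q) => (i : ℕ) < p).image (fun i => σ i)).card
    ∧ Integrable
        (fun t : Fin (p + q) → A =>
          f (fun i => t (Fin.castAdd q i)) * g (fun j => t (Fin.natAdd p j)) *
            f (fun i => t (σ (Fin.castAdd q i))) * g (fun j => t (σ (Fin.natAdd p j))))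
        (Measure.pi fun _ : Fin (p + q) => μ)
    ∧ (∫ t : Fin (p + q) → A,
          f (fun i => t (Fin.castAdd q i)) * g (fun j => t (Fin.natAdd p j)) *
            f (fun i => t (σ (Fin.castAdd q i))) * g (fun j => t (σ (Fin.natAdd p j)))
          ∂(Measure.pi fun _ : Fin (p + q) => μ))
        = ∫ x : Fin ((p - r) + (q - r)) → A, (contraction μ p q r f g x) ^ 2
            ∂(Measure.pi fun _ : Fin ((p - r) + (q - r)) => μ) := by
  classical
  set f' := hf.1.mk f with hf'def
  set g' := hg.1.mk g with hg'def
  have hff' : f =ᵐ[Measure.pi fun _ : Fin p => μ] f' := hf.1.ae_eq_mk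
  have hgg' : g =ᵐ[Measure.pi fun _ : Fin q => μ] g' := hg.1.ae_eq_mk
  have hf'm : StronglyMeasurable f' := hf.1.stronglyMeasurable_mk
  have hg'm : StronglyMeasurable g' := hg.1.stronglyMeasurable_mk
  have hf' : MemLp f' 2 (Measure.pi fun _ : Fin p => μ) := hf.ae_eq hff'
  have hg' : MemLp g' 2 (Measure.pi fun _ : Fin q => μ) := hg.ae_eq hgg'
  have hf'symm : ∀ π : Equiv.Perm (Fin p),
      ∀ᵐ t ∂(Measure.pi fun _ : Fin p => μ), f' (fun i => t (π i)) = f' t := by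
    intro π
    have h1 := ae_comp_inj μ π.injective hff'
    filter_upwards [h1, hfsymm π, hff'] with t a b c
    rw [← a, b, c]
  have hg'symm : ∀ π : Equiv.Perm (Fin q),
      ∀ᵐ t ∂(Measure.pi fun _ : Fin q => μ), g' (fun i => t (π i)) = g' t := by
    intro π
    have h1 := ae_comp_inj μ π.injective hgg'
    filter_upwards [h1, hgsymm π, hgg'] with t a b c
    rw [← a, b, c]
  have main := main_aux μ p q f' g' hf'm hg'm hf' hg' hf'symm hg'symm σ r hr
  -- transfer the integrand
  have hc1 := ae_comp_inj μ (Fin.castAdd_injective p q) hff'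
  have hc2 := ae_comp_inj μ (natAdd_inj p q) hgg'
  have hc3 := ae_comp_inj μ (σ.injective.comp (Fin.castAdd_injective p q)) hff'
  have hc4 := ae_comp_inj μ (σ.injective.comp (natAdd_inj p q)) hgg'
  have haeFF' : (fun t : Fin (p + q) → A =>
      f (fun i => t (Fin.castAdd q i)) * g (fun j => t (Fin.natAdd p j)) *
        f (fun i => t (σ (Fin.castAdd q i))) * g (fun j => t (σ (Fin.natAdd p j))))
      =ᵐ[Measure.pi fun _ : Fin (p + q) => μ]
      (fun t : Fin (p + q) → A =>
        f' (fun i => t (Fin.castAdd q i)) * g' (fun j => t (Fin.natAdd p j)) *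
          f' (fun i => t (σ (Fin.castAdd q i))) * g' (fun j => t (σ (Fin.natAdd p j)))) := by
    filter_upwards [hc1, hc2, hc3, hc4] with t a b c d
    have a' : f (fun i => t (Fin.castAdd q i)) = f' (fun i => t (Fin.castAdd q i)) := a
    have b' : g (fun j => t (Fin.natAdd p j)) = g' (fun j => t (Fin.natAdd p j)) := b
    have c' : f (fun i => t (σ (Fin.castAdd q i))) = f' (fun i => t (σ (Fin.castAdd q i))) := c
    have d' : g (fun j => t (σ (Fin.natAdd p j))) = g' (fun j => t (σ (Fin.natAdd p j))) := d
    rw [a', b', c', d']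
  -- transfer the contraction
  have hcontr : (fun x => (contraction μ p q r f g x) ^ 2)
      =ᵐ[Measure.pi fun _ : Fin ((p - r) + (q - r)) => μ]
      (fun x => (contraction μ p q r f' g' x) ^ 2) := by
    have MPK : MeasurePreserving
        (⇑(MeasurableEquiv.sumPiEquivProdPi (fun _ : Fin ((p - r) + (q - r)) ⊕ Fin r => A)).symm)
        ((Measure.pi fun _ : Fin ((p - r) + (q - r)) => μ).prod (Measure.pi fun _ : Fin r => μ))
        (Measure.pi fun _ : Fin ((p - r) + (q - r)) ⊕ Fin r => μ) :=
      measurePreserving_sumPiEquivProdPi_symm (fun _ : Fin ((p - r) + (q - r)) ⊕ Fin r => μ)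
    have hA := ae_comp_inj μ (eAmap_inj p q r) hff'
    have hB := ae_comp_inj μ (eBmap_inj p q r) hgg'
    have hA' : ∀ᵐ z ∂((Measure.pi fun _ : Fin ((p - r) + (q - r)) => μ).prod
        (Measure.pi fun _ : Fin r => μ)),
        f (glueA p q r z.1 z.2) = f' (glueA p q r z.1 z.2) := by
      have := ae_of_ae_map MPK.measurable.aemeasurable (by rw [MPK.map_eq]; exact hA)
      filter_upwards [this] with z hz
      have heq : (fun i => (MeasurableEquiv.sumPiEquivProdPi
          (fun _ : Fin ((p - r) + (q - r)) ⊕ Fin r => A)).symm z (eAmap p q r i))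
          = glueA p q r z.1 z.2 := by
        funext i
        by_cases h : (i : ℕ) < p - r
        · simp only [eAmap, glueA, dif_pos h]
          exact congrArg z.1 (Fin.ext (by simp))
        · simp only [eAmap, glueA, dif_neg h]
          rfl
      rw [← heq]
      exact hz
    have hB' : ∀ᵐ z ∂((Measure.pi fun _ : Fin ((p - r) + (q - r)) => μ).prod
        (Measure.pi fun _ : Fin r => μ)),
        g (glueB p q r z.1 z.2) = g' (glueB p q r z.1 z.2) := by
      have := ae_of_ae_map MPK.measurable.aemeasurable (by rw [MPK.map_eq]; exact hB)
      filter_upwards [this] with z hz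
      have heq : (fun j => (MeasurableEquiv.sumPiEquivProdPi
          (fun _ : Fin ((p - r) + (q - r)) ⊕ Fin r => A)).symm z (eBmap p q r j))
          = glueB p q r z.1 z.2 := by
        funext j
        by_cases h : (j : ℕ) < q - r
        · simp only [eBmap, glueB, dif_pos h]
          exact congrArg z.1 (Fin.ext (by simp))
        · simp only [eBmap, glueB, dif_neg h]
          rfl
      rw [← heq]
      exact hz
    have hprod : ∀ᵐ z ∂((Measure.pi fun _ : Fin ((p - r) + (q - r)) => μ).prod
        (Measure.pi fun _ : Fin r => μ)),
        f (glueA p q r z.1 z.2) * g (glueB p q r z.1 z.2)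
          = f' (glueA p q r z.1 z.2) * g' (glueB p q r z.1 z.2) := by
      filter_upwards [hA', hB'] with z h1 h2
      rw [h1, h2]
    have hsec := MeasureTheory.Measure.ae_ae_of_ae_prod hprod
    filter_upwards [hsec] with t ht
    have : contraction μ p q r f g t = contraction μ p q r f' g' t := by
      rw [contraction_eq_glue, contraction_eq_glue]
      exact integral_congr_ae ht
    rw [this]
  refine ⟨main.1, (integrable_congr haeFF').mpr main.2.1, ?_⟩
  calc (∫ t : Fin (p + q) → A,
        f (fun i => t (Fin.castAdd q i)) * g (fun j => t (Fin.natAdd p j)) *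
          f (fun i => t (σ (Fin.castAdd q i))) * g (fun j => t (σ (Fin.natAdd p j)))
        ∂(Measure.pi fun _ : Fin (p + q) => μ))
      = ∫ t : Fin (p + q) → A,
          f' (fun i => t (Fin.castAdd q i)) * g' (fun j => t (Fin.natAdd p j)) *
            f' (fun i => t (σ (Fin.castAdd q i))) * g' (fun j => t (σ (Fin.natAdd p j)))
          ∂(Measure.pi fun _ : Fin (p + q) => μ) := integral_congr_ae haeFF'
    _ = ∫ x : Fin ((p - r) + (q - r)) → A, (contraction μ p q r f' g' x) ^ 2
          ∂(Measure.pi fun _ : Fin ((p - r) + (q - r)) => μ) := main.2.2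
    _ = ∫ x : Fin ((p - r) + (q - r)) → A, (contraction μ p q r f g x) ^ 2
          ∂(Measure.pi fun _ : Fin ((p - r) + (q - r)) => μ) :=
        (integral_congr_ae hcontr).symm
end final
end

section
/- Let p, q ≥ 1 be integers and let 0 ≤ r ≤ p∧q. The number of permutations σ of the set {1, …, p+q} such that the cardinality of {1, …, p} ∩ {σ(p+1), …, σ(p+q)} equals r is exactly p! · C(p,r) · q! · C(q,r), where C(n,r) denotes the binomial coefficient. -/
open Finset Equiv

/-- Permutations mapping `B` onto `S` correspond to pairs of bijections. -/
private def permFiberEquiv {α : Type*} [DecidableEq α] (B S : Finset α) :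
    {σ : Equiv.Perm α // ∀ a, a ∈ B ↔ σ a ∈ S} ≃
      (({a // a ∈ B} ≃ {a // a ∈ S}) × ({a // ¬ a ∈ B} ≃ {a // ¬ a ∈ S})) where
  toFun := fun ⟨σ, h⟩ =>
    (Equiv.subtypeEquiv σ h, Equiv.subtypeEquiv σ (fun a => not_iff_not.2 (h a)))
  invFun := fun ⟨f, g⟩ =>
    ⟨(Equiv.sumCompl (· ∈ B)).symm.trans ((f.sumCongr g).trans (Equiv.sumCompl (· ∈ S))),
      by
        intro a
        by_cases ha : a ∈ B
        · simp [Equiv.sumCompl_symm_apply_of_pos ha, ha, (f ⟨a, ha⟩).2]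
        · simp only [Equiv.trans_apply, Equiv.sumCompl_symm_apply_of_neg ha,
            Equiv.sumCongr_apply, Sum.map_inr, Equiv.sumCompl_apply_inr]
          exact iff_of_false ha (g ⟨a, ha⟩).2⟩
  left_inv := fun ⟨σ, h⟩ => by
    ext a
    by_cases ha : a ∈ B
    · simp [Equiv.sumCompl_symm_apply_of_pos ha, Equiv.subtypeEquiv]
    · simp [Equiv.sumCompl_symm_apply_of_neg ha, Equiv.subtypeEquiv]
  right_inv := fun ⟨f, g⟩ => by
    refine Prod.ext ?_ ?_ <;>
    · ext ⟨a, ha⟩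
      simp [Equiv.subtypeEquiv, Equiv.sumCompl_symm_apply_of_pos,
        Equiv.sumCompl_symm_apply_of_neg, ha]

private lemma perm_image_eq_iff {α : Type*} [DecidableEq α] (B S : Finset α)
    (σ : Equiv.Perm α) :
    B.image (fun i => σ i) = S ↔ ∀ a, a ∈ B ↔ σ a ∈ S := by
  constructor
  · rintro rfl a
    constructor
    · exact fun h => Finset.mem_image_of_mem _ h
    · intro h
      obtain ⟨b, hb, hba⟩ := Finset.mem_image.1 h
      rwa [← σ.injective hba]
  · intro h
    ext y
    simp only [Finset.mem_image]
    constructor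
    · rintro ⟨b, hb, rfl⟩; exact (h b).1 hb
    · intro hy
      exact ⟨σ.symm y, (h _).2 (by simpa using hy), by simp⟩

private lemma card_perm_fiber {α : Type*} [Fintype α] [DecidableEq α]
    (B S : Finset α) (hBS : B.card = S.card) :
    (Finset.univ.filter fun σ : Equiv.Perm α => B.image (fun i => σ i) = S).card
      = Nat.factorial B.card * Nat.factorial Bᶜ.card := by
  have h1 : (Finset.univ.filter fun σ : Equiv.Perm α => B.image (fun i => σ i) = S)
      = (Finset.univ.filter fun σ : Equiv.Perm α => ∀ a, a ∈ B ↔ σ a ∈ S) := by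
    apply Finset.filter_congr
    intro σ _
    simpa using perm_image_eq_iff B S σ
  rw [h1, ← Fintype.card_subtype]
  rw [Fintype.card_congr (permFiberEquiv B S)]
  have e1 : {a // a ∈ B} ≃ {a // a ∈ S} := Finset.equivOfCardEq hBS
  have hc : Bᶜ.card = Sᶜ.card := by
    simp [Finset.card_compl, hBS]
  have e2 : {a // ¬ a ∈ B} ≃ {a // ¬ a ∈ S} :=
    ((Equiv.subtypeEquivRight (fun a => (Finset.mem_compl (s := B)).symm)).trans
      (Finset.equivOfCardEq hc)).trans
      (Equiv.subtypeEquivRight (fun a => Finset.mem_compl (s := S)))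
  rw [Fintype.card_prod, Fintype.card_equiv e1, Fintype.card_equiv e2]
  have hB : Fintype.card {a // a ∈ B} = B.card := Fintype.card_coe B
  have hBc : Fintype.card {a // ¬ a ∈ B} = Bᶜ.card := by
    rw [Fintype.card_subtype]
    congr 1
    ext a
    simp
  rw [hB, hBc]

private lemma card_subsets_with_inter {α : Type*} [Fintype α] [DecidableEq α]
    (A : Finset α) (n r : ℕ) (hr : r ≤ n) :
    ((Finset.univ.powersetCard n).filter fun S => (A ∩ S).card = r).card
      = A.card.choose r * Aᶜ.card.choose (n - r) := by
  rw [← Finset.card_powersetCard, ← Finset.card_powersetCard, ← Finset.card_product]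
  apply Finset.card_nbij' (fun S => (A ∩ S, S \ A)) (fun P => P.1 ∪ P.2)
  · intro S hS
    simp only [Finset.mem_coe, Finset.mem_filter, Finset.mem_powersetCard, Finset.mem_product] at hS ⊢
    obtain ⟨⟨_, hcard⟩, hinter⟩ := hS
    refine ⟨⟨Finset.inter_subset_left, hinter⟩,
      fun a ha => Finset.mem_compl.2 (Finset.mem_sdiff.1 ha).2, ?_⟩
    have hsd : S \ A = S \ (A ∩ S) := by
      ext a; simp only [Finset.mem_sdiff, Finset.mem_inter]; tauto
    rw [hsd, Finset.card_sdiff_of_subset Finset.inter_subset_right, hcard, hinter]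
  · intro P hP
    simp only [Finset.mem_coe, Finset.mem_filter, Finset.mem_powersetCard, Finset.mem_product] at hP ⊢
    obtain ⟨⟨hP1, hP1c⟩, hP2, hP2c⟩ := hP
    have hdisj : Disjoint P.1 P.2 :=
      Finset.disjoint_left.2 fun a ha1 ha2 => Finset.mem_compl.1 (hP2 ha2) (hP1 ha1)
    have hint : A ∩ (P.1 ∪ P.2) = P.1 := by
      ext a
      simp only [Finset.mem_inter, Finset.mem_union]
      constructor
      · rintro ⟨haA, h1 | h2⟩
        · exact h1
        · exact absurd haA (Finset.mem_compl.1 (hP2 h2))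
      · intro h1; exact ⟨hP1 h1, Or.inl h1⟩
    refine ⟨⟨Finset.subset_univ _, ?_⟩, ?_⟩
    · rw [Finset.card_union_of_disjoint hdisj, hP1c, hP2c, Nat.add_sub_cancel' hr]
    · rw [hint, hP1c]
  · intro S hS
    simp only [Finset.mem_coe, Finset.mem_filter, Finset.mem_powersetCard] at hS
    ext a
    simp only [Finset.mem_union, Finset.mem_inter, Finset.mem_sdiff]
    by_cases ha : a ∈ A <;> tauto
  · intro P hP
    simp only [Finset.mem_coe, Finset.mem_filter, Finset.mem_powersetCard, Finset.mem_product] at hP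
    obtain ⟨⟨hP1, hP1c⟩, hP2, hP2c⟩ := hP
    have h1 : A ∩ (P.1 ∪ P.2) = P.1 := by
      ext a
      simp only [Finset.mem_inter, Finset.mem_union]
      constructor
      · rintro ⟨haA, h1 | h2⟩
        · exact h1
        · exact absurd haA (Finset.mem_compl.1 (hP2 h2))
      · intro h1; exact ⟨hP1 h1, Or.inl h1⟩
    have h2 : (P.1 ∪ P.2) \ A = P.2 := by
      ext a
      simp only [Finset.mem_sdiff, Finset.mem_union]
      constructor
      · rintro ⟨h1 | h2, haA⟩
        · exact absurd (hP1 h1) haA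
        · exact h2
      · intro h2; exact ⟨Or.inr h2, Finset.mem_compl.1 (hP2 h2)⟩
    beta_reduce
    rw [h1, h2]

/-- **Permutation count of Nourdin–Rosiński, proof of Lemma 2.2(1)**: for integers
`p, q ≥ 1` and `0 ≤ r ≤ p ∧ q`, the number of permutations `σ` of `{1,…,p+q}` such
that `|{1,…,p} ∩ {σ(p+1),…,σ(p+q)}| = r` equals `p! C(p,r) q! C(q,r)`. -/
theorem card_perms_with_intersection_card
    (p q r : ℕ) (hp : 1 ≤ p) (hq : 1 ≤ q) (hr : r ≤ min p q) :
    (Finset.univ.filter fun σ : Equiv.Perm (Fin (p + q)) =>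
        ((Finset.univ.filter fun i : Fin (p + q) => (i : ℕ) < p) ∩
          (Finset.univ.filter fun i : Fin (p + q) => p ≤ (i : ℕ)).image
            (fun i => σ i)).card = r).card
      = p.factorial * p.choose r * (q.factorial * q.choose r) := by
  have hrp : r ≤ p := hr.trans (min_le_left _ _)
  have hrq : r ≤ q := hr.trans (min_le_right _ _)
  set A : Finset (Fin (p + q)) := Finset.univ.filter fun i => (i : ℕ) < p with hA
  set B : Finset (Fin (p + q)) := Finset.univ.filter fun i => p ≤ (i : ℕ) with hB
  have hBA : B = Aᶜ := by
    ext i; simp [hA, hB, not_lt]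
  have hAcard : A.card = p := by
    have e : {i : Fin (p+q) // (i : ℕ) < p} ≃ Fin p :=
      { toFun := fun i => ⟨(i.1 : ℕ), i.2⟩
        invFun := fun j => ⟨⟨(j : ℕ), lt_of_lt_of_le j.2 (Nat.le_add_right p q)⟩, j.2⟩
        left_inv := fun i => rfl
        right_inv := fun j => rfl }
    rw [hA, ← Fintype.card_subtype, Fintype.card_congr e, Fintype.card_fin]
  have hBcard : B.card = q := by
    rw [hBA, Finset.card_compl, hAcard]
    simp
  have hBAc : Bᶜ = A := by rw [hBA, compl_compl]
  -- fiberwise counting over the image of B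
  set t : Finset (Finset (Fin (p+q))) :=
    (Finset.univ.powersetCard q).filter fun S => (A ∩ S).card = r with ht
  rw [Finset.card_eq_sum_card_fiberwise (t := t)
    (f := fun σ : Equiv.Perm (Fin (p+q)) => B.image (fun i => σ i))
    (fun σ hσ => by
      simp only [Finset.mem_coe, Finset.mem_filter] at hσ
      simp only [ht, Finset.mem_coe, Finset.mem_filter, Finset.mem_powersetCard]
      refine ⟨⟨Finset.subset_univ _, ?_⟩, hσ.2⟩
      rw [Finset.card_image_of_injective _ σ.injective, hBcard])]
  have hfib : ∀ S ∈ t,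
      ((Finset.univ.filter fun σ : Equiv.Perm (Fin (p+q)) =>
        (A ∩ B.image (fun i => σ i)).card = r).filter
          fun σ => B.image (fun i => σ i) = S).card
        = Nat.factorial q * Nat.factorial p := by
    intro S hS
    simp only [ht, Finset.mem_filter, Finset.mem_powersetCard] at hS
    have : ((Finset.univ.filter fun σ : Equiv.Perm (Fin (p+q)) =>
        (A ∩ B.image (fun i => σ i)).card = r).filter
          fun σ => B.image (fun i => σ i) = S)
        = Finset.univ.filter fun σ : Equiv.Perm (Fin (p+q)) =>
            B.image (fun i => σ i) = S := by
      rw [Finset.filter_filter]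
      apply Finset.filter_congr
      intro σ _
      constructor
      · exact fun h => h.2
      · intro h; exact ⟨by rw [h]; exact hS.2, h⟩
    rw [this, card_perm_fiber B S (by rw [hBcard, hS.1.2]), hBcard, hBAc, hAcard]
  rw [Finset.sum_congr rfl hfib, Finset.sum_const, ht,
    card_subsets_with_inter A q r hrq, hAcard, ← hBA, hBcard,
    Nat.choose_symm hrq, smul_eq_mul]
  ring
end

section
/- Let d ≥ 1 and let F = (F_1, …, F_d) and G = (G_1, …, G_d) be independent and identically distributed ℝ^d-valued random vectors with E[F_i] = 0 for all i and E[‖F‖⁴] < ∞, where ‖·‖ is the Euclidean norm on ℝ^d. Then (1/2) Cov(‖F+G‖², ‖F−G‖²) = E[‖F‖⁴] − (E[‖F‖²])² − 2 Σ_{i,j=1}^d Cov(F_i, F_j)². -/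
open MeasureTheory ProbabilityTheory

/-- **Covariance identity for `‖F+G‖², ‖F-G‖²`** (proof of Theorem 4.2 of
Nourdin–Rosiński): if `F` and `G` are i.i.d. centered `ℝ^d`-valued random vectors
with `E[‖F‖⁴] < ∞`, then
`(1/2) Cov(‖F+G‖², ‖F-G‖²) = E[‖F‖⁴] - (E[‖F‖²])² - 2 ∑_{i,j} Cov(F_i,F_j)²`. -/
theorem cov_norm_sq_sum_diff
    {Ω : Type*} [MeasurableSpace Ω] (P : Measure Ω) [IsProbabilityMeasure P]
    (d : ℕ) (hd : 1 ≤ d)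
    (F G : Ω → (Fin d → ℝ)) (hF : Measurable F) (hG : Measurable G)
    (hindep : IndepFun F G P) (hid : IdentDistrib F G P P)
    (hmean : ∀ i, ∫ ω, F ω i ∂P = 0)
    (hmom : Integrable (fun ω => (∑ i, F ω i ^ 2) ^ 2) P) :
    (1 / 2 : ℝ) *
        ((∫ ω, (∑ i, (F ω i + G ω i) ^ 2) * (∑ i, (F ω i - G ω i) ^ 2) ∂P)
          - (∫ ω, ∑ i, (F ω i + G ω i) ^ 2 ∂P) * (∫ ω, ∑ i, (F ω i - G ω i) ^ 2 ∂P))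
      = (∫ ω, (∑ i, F ω i ^ 2) ^ 2 ∂P) - (∫ ω, ∑ i, F ω i ^ 2 ∂P) ^ 2
        - 2 * ∑ i, ∑ j,
            ((∫ ω, F ω i * F ω j ∂P) - (∫ ω, F ω i ∂P) * (∫ ω, F ω j ∂P)) ^ 2 := by
  -- measurable coordinate functions
  have hFi : ∀ i, Measurable (fun ω => F ω i) := fun i => (measurable_pi_apply i).comp hF
  have hGi : ∀ i, Measurable (fun ω => G ω i) := fun i => (measurable_pi_apply i).comp hG
  -- measurable maps on ℝ^d
  have hφS : Measurable (fun x : Fin d → ℝ => ∑ i, x i ^ 2) := by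
    exact Finset.measurable_sum _ (fun i _ => (measurable_pi_apply i).pow_const 2)
  have hφS2 : Measurable (fun x : Fin d → ℝ => (∑ i, x i ^ 2) ^ 2) := hφS.pow_const 2
  have hφij : ∀ i j, Measurable (fun x : Fin d → ℝ => x i * x j) := fun i j =>
    (measurable_pi_apply i).mul (measurable_pi_apply j)
  -- identdistrib transfer
  have hidc : ∀ (φ : (Fin d → ℝ) → ℝ), Measurable φ →
      IdentDistrib (fun ω => φ (F ω)) (fun ω => φ (G ω)) P P :=
    fun φ hφ => hid.comp hφ
  -- independence of composites
  have hic : ∀ (φ ψ : (Fin d → ℝ) → ℝ), Measurable φ → Measurable ψ →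
      IndepFun (fun ω => φ (F ω)) (fun ω => ψ (G ω)) P :=
    fun φ ψ hφ hψ => hindep.comp hφ hψ
  -- integrability of S_F = ∑ F_i²
  have hSF : Integrable (fun ω => ∑ i, F ω i ^ 2) P := by
    refine Integrable.mono' ((integrable_const (1:ℝ)).add hmom)
      (hφS.comp hF).aestronglyMeasurable (Filter.Eventually.of_forall fun ω => ?_)
    have h0 : (0:ℝ) ≤ ∑ i, F ω i ^ 2 := Finset.sum_nonneg fun i _ => sq_nonneg _
    simp only [Pi.add_apply]
    rw [Real.norm_eq_abs, abs_of_nonneg h0]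
    nlinarith [sq_nonneg (∑ i, F ω i ^ 2 - 1)]
  have hSG : Integrable (fun ω => ∑ i, G ω i ^ 2) P :=
    ((hidc _ hφS).integrable_iff).mp hSF
  have hSG2 : Integrable (fun ω => (∑ i, G ω i ^ 2) ^ 2) P :=
    ((hidc _ hφS2).integrable_iff).mp hmom
  -- integrability of F_i², F_iF_j, F_i
  have hFi2 : ∀ i, Integrable (fun ω => F ω i ^ 2) P := by
    intro i
    refine hSF.mono' ((hFi i).pow_const 2).aestronglyMeasurable
      (Filter.Eventually.of_forall fun ω => ?_)
    rw [Real.norm_eq_abs, abs_of_nonneg (sq_nonneg _)]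
    exact Finset.single_le_sum (f := fun j => F ω j ^ 2) (fun j _ => sq_nonneg _)
      (Finset.mem_univ i)
  have hGi2 : ∀ i, Integrable (fun ω => G ω i ^ 2) P := fun i =>
    ((hidc _ ((measurable_pi_apply i).pow_const 2)).integrable_iff).mp (hFi2 i)
  have hFij : ∀ i j, Integrable (fun ω => F ω i * F ω j) P := by
    intro i j
    refine ((hFi2 i).add (hFi2 j)).mono' ((hFi i).mul (hFi j)).aestronglyMeasurable
      (Filter.Eventually.of_forall fun ω => ?_)
    simp only [Pi.add_apply]
    rw [Real.norm_eq_abs, abs_mul]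
    nlinarith [sq_nonneg (|F ω i| - |F ω j|), sq_abs (F ω i), sq_abs (F ω j),
      abs_nonneg (F ω i), abs_nonneg (F ω j)]
  have hGij : ∀ i j, Integrable (fun ω => G ω i * G ω j) P := fun i j =>
    ((hidc _ (hφij i j)).integrable_iff).mp (hFij i j)
  have hFint : ∀ i, Integrable (fun ω => F ω i) P := by
    intro i
    refine ((integrable_const (1:ℝ)).add (hFi2 i)).mono' (hFi i).aestronglyMeasurable
      (Filter.Eventually.of_forall fun ω => ?_)
    simp only [Pi.add_apply]
    rw [Real.norm_eq_abs]
    nlinarith [sq_nonneg (|F ω i| - 1), sq_abs (F ω i), abs_nonneg (F ω i)]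
  have hGint : ∀ i, Integrable (fun ω => G ω i) P := fun i =>
    ((hidc _ (measurable_pi_apply i)).integrable_iff).mp (hFint i)
  -- notation
  set M2 : ℝ := ∫ ω, ∑ i, F ω i ^ 2 ∂P with hM2
  set M4 : ℝ := ∫ ω, (∑ i, F ω i ^ 2) ^ 2 ∂P with hM4
  set C : Fin d → Fin d → ℝ := fun i j => ∫ ω, F ω i * F ω j ∂P with hC
  -- transferred integrals for G
  have hGint2 : (∫ ω, ∑ i, G ω i ^ 2 ∂P) = M2 := ((hidc _ hφS).integral_eq).symm
  have hGint4 : (∫ ω, (∑ i, G ω i ^ 2) ^ 2 ∂P) = M4 := ((hidc _ hφS2).integral_eq).symm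
  have hGintij : ∀ i j, (∫ ω, G ω i * G ω j ∂P) = C i j := fun i j =>
    ((hidc _ (hφij i j)).integral_eq).symm
  have hGmean : ∀ i, (∫ ω, G ω i ∂P) = 0 := fun i => by
    rw [((hidc _ (measurable_pi_apply i)).integral_eq).symm]; exact hmean i
  -- cross-term integrals
  have hFG : ∀ i, Integrable (fun ω => F ω i * G ω i) P := fun i =>
    (hic _ _ (measurable_pi_apply i) (measurable_pi_apply i)).integrable_mul
      (hFint i) (hGint i)
  have hFGint : ∀ i, (∫ ω, F ω i * G ω i ∂P) = 0 := fun i => by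
    rw [(hic _ _ (measurable_pi_apply i) (measurable_pi_apply i)).integral_fun_mul_eq_mul_integral
      ((hFint i).aestronglyMeasurable) ((hGint i).aestronglyMeasurable),
      hmean i, zero_mul]
  have hT : Integrable (fun ω => ∑ i, F ω i * G ω i) P := by
    exact integrable_finset_sum _ (fun i _ => hFG i)
  have hTint : (∫ ω, ∑ i, F ω i * G ω i ∂P) = 0 := by
    rw [integral_finset_sum _ (fun i _ => hFG i)]
    simp [hFGint]
  -- E[∑(F_i+G_i)²] = 2 M2
  have e1 : (∫ ω, ∑ i, (F ω i + G ω i) ^ 2 ∂P) = 2 * M2 := by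
    have hfun : (fun ω => ∑ i, (F ω i + G ω i) ^ 2)
        = fun ω => (∑ i, F ω i ^ 2) + ((∑ i, G ω i ^ 2) + 2 * ∑ i, F ω i * G ω i) := by
      funext ω
      rw [Finset.mul_sum, ← Finset.sum_add_distrib, ← Finset.sum_add_distrib]
      exact Finset.sum_congr rfl fun i _ => by ring
    rw [hfun,
      integral_add (f := fun ω => ∑ i, F ω i ^ 2)
        (g := fun ω => (∑ i, G ω i ^ 2) + 2 * ∑ i, F ω i * G ω i)
        hSF (hSG.add (hT.const_mul 2)),
      integral_add (f := fun ω => ∑ i, G ω i ^ 2)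
        (g := fun ω => 2 * ∑ i, F ω i * G ω i)
        hSG (hT.const_mul 2),
      integral_const_mul, hTint, hGint2]
    ring
  have e2 : (∫ ω, ∑ i, (F ω i - G ω i) ^ 2 ∂P) = 2 * M2 := by
    have hfun : (fun ω => ∑ i, (F ω i - G ω i) ^ 2)
        = fun ω => (∑ i, F ω i ^ 2) + ((∑ i, G ω i ^ 2) + (-2) * ∑ i, F ω i * G ω i) := by
      funext ω
      rw [Finset.mul_sum, ← Finset.sum_add_distrib, ← Finset.sum_add_distrib]
      exact Finset.sum_congr rfl fun i _ => by ring
    rw [hfun,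
      integral_add (f := fun ω => ∑ i, F ω i ^ 2)
        (g := fun ω => (∑ i, G ω i ^ 2) + (-2) * ∑ i, F ω i * G ω i)
        hSF (hSG.add (hT.const_mul (-2))),
      integral_add (f := fun ω => ∑ i, G ω i ^ 2)
        (g := fun ω => (-2) * ∑ i, F ω i * G ω i)
        hSG (hT.const_mul (-2)),
      integral_const_mul, hTint, hGint2]
    ring
  -- integrability of products in the main expansion
  have hSFSG : Integrable (fun ω => (∑ i, F ω i ^ 2) * (∑ i, G ω i ^ 2)) P :=
    (hic _ _ hφS hφS).integrable_mul hSF hSG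
  have hPij : ∀ i j, Integrable (fun ω => (F ω i * F ω j) * (G ω i * G ω j)) P := fun i j =>
    (hic _ _ (hφij i j) (hφij i j)).integrable_mul (hFij i j) (hGij i j)
  have hPijint : ∀ i j, (∫ ω, (F ω i * F ω j) * (G ω i * G ω j) ∂P) = C i j * C i j :=
    fun i j => by
      rw [(hic _ _ (hφij i j) (hφij i j)).integral_fun_mul_eq_mul_integral
        ((hFij i j).aestronglyMeasurable) ((hGij i j).aestronglyMeasurable), hGintij]
  have hSFSGint : (∫ ω, (∑ i, F ω i ^ 2) * (∑ i, G ω i ^ 2) ∂P) = M2 * M2 := by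
    rw [(hic _ _ hφS hφS).integral_fun_mul_eq_mul_integral hSF.aestronglyMeasurable hSG.aestronglyMeasurable,
      hGint2]
  -- the main product expansion
  have e3 : (∫ ω, (∑ i, (F ω i + G ω i) ^ 2) * (∑ i, (F ω i - G ω i) ^ 2) ∂P)
      = 2 * M4 + 2 * (M2 * M2) - 4 * ∑ i, ∑ j, C i j * C i j := by
    have hfun : (fun ω => (∑ i, (F ω i + G ω i) ^ 2) * (∑ i, (F ω i - G ω i) ^ 2))
        = fun ω => (∑ i, F ω i ^ 2) ^ 2 + ((∑ i, G ω i ^ 2) ^ 2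
            + (2 * ((∑ i, F ω i ^ 2) * (∑ i, G ω i ^ 2))
              + (-4) * ∑ i, ∑ j, (F ω i * F ω j) * (G ω i * G ω j))) := by
      funext ω
      have h1 : (∑ i, (F ω i + G ω i) ^ 2)
          = (∑ i, F ω i ^ 2) + (∑ i, G ω i ^ 2) + 2 * ∑ i, F ω i * G ω i := by
        rw [Finset.mul_sum, ← Finset.sum_add_distrib, ← Finset.sum_add_distrib]
        exact Finset.sum_congr rfl fun i _ => by ring
      have h2 : (∑ i, (F ω i - G ω i) ^ 2)
          = (∑ i, F ω i ^ 2) + (∑ i, G ω i ^ 2) - 2 * ∑ i, F ω i * G ω i := by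
        rw [Finset.mul_sum, ← Finset.sum_add_distrib, ← Finset.sum_sub_distrib]
        exact Finset.sum_congr rfl fun i _ => by ring
      have h3 : (∑ i, F ω i * G ω i) * (∑ j, F ω j * G ω j)
          = ∑ i, ∑ j, (F ω i * F ω j) * (G ω i * G ω j) := by
        rw [Finset.sum_mul_sum]
        exact Finset.sum_congr rfl fun i _ => Finset.sum_congr rfl fun j _ => by ring
      rw [h1, h2, ← h3]
      ring
    have hsum : Integrable (fun ω => ∑ i, ∑ j, (F ω i * F ω j) * (G ω i * G ω j)) P :=
      integrable_finset_sum _ fun i _ => integrable_finset_sum _ fun j _ => hPij i j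
    rw [hfun,
      integral_add (f := fun ω => (∑ i, F ω i ^ 2) ^ 2)
        (g := fun ω => (∑ i, G ω i ^ 2) ^ 2
            + (2 * ((∑ i, F ω i ^ 2) * (∑ i, G ω i ^ 2))
              + (-4) * ∑ i, ∑ j, (F ω i * F ω j) * (G ω i * G ω j)))
        hmom (hSG2.add ((hSFSG.const_mul 2).add (hsum.const_mul (-4)))),
      integral_add (f := fun ω => (∑ i, G ω i ^ 2) ^ 2)
        (g := fun ω => 2 * ((∑ i, F ω i ^ 2) * (∑ i, G ω i ^ 2))
              + (-4) * ∑ i, ∑ j, (F ω i * F ω j) * (G ω i * G ω j))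
        hSG2 ((hSFSG.const_mul 2).add (hsum.const_mul (-4))),
      integral_add (f := fun ω => 2 * ((∑ i, F ω i ^ 2) * (∑ i, G ω i ^ 2)))
        (g := fun ω => (-4) * ∑ i, ∑ j, (F ω i * F ω j) * (G ω i * G ω j))
        (hSFSG.const_mul 2) (hsum.const_mul (-4)),
      integral_const_mul, integral_const_mul, hSFSGint, hGint4]
    rw [integral_finset_sum _ (fun i _ => integrable_finset_sum _ fun j _ => hPij i j)]
    have : ∀ i : Fin d, (∫ ω, ∑ j, (F ω i * F ω j) * (G ω i * G ω j) ∂P)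
        = ∑ j, C i j * C i j := by
      intro i
      rw [integral_finset_sum _ (fun j _ => hPij i j)]
      exact Finset.sum_congr rfl fun j _ => hPijint i j
    rw [Finset.sum_congr rfl fun i _ => this i]
    ring
  -- conclude
  rw [e1, e2, e3]
  have hRHS : ∀ i j : Fin d,
      ((∫ ω, F ω i * F ω j ∂P) - (∫ ω, F ω i ∂P) * (∫ ω, F ω j ∂P)) ^ 2 = C i j * C i j := by
    intro i j
    rw [hmean i, zero_mul, sub_zero]
    ring
  rw [Finset.sum_congr rfl fun i _ => Finset.sum_congr rfl fun j _ => hRHS i j]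
  ring
end
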